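/- arXiv:1810.02040 — 6 statements merged into one kernel-verified Lean document; each statement's English description precedes it below -/
import Mathlib

section
/- For all positive integers n, the number I_n of unlabeled interval graphs on n vertices is at most (2n-1)!! = ∏_{j=1}^{n} (2j-1). -/
def IsIntervalGraph {n : ℕ} (G : SimpleGraph (Fin n)) : Prop :=
  ∃ a b : Fin n → ℝ, (∀ i, a i ≤ b i) ∧
    ∀ i j, i ≠ j → (G.Adj i j ↔ (Set.Icc (a i) (b i) ∩ Set.Icc (a j) (b j)).Nonempty)

def intervalIsoSetoid (n : ℕ) : Setoid {G : SimpleGraph (Fin n) // IsIntervalGraph G} where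
  r G H := Nonempty (G.1 ≃g H.1)
  iseqv := ⟨fun G => ⟨SimpleGraph.Iso.refl⟩,
    fun ⟨e⟩ => ⟨e.symm⟩, fun ⟨e⟩ ⟨f⟩ => ⟨e.trans f⟩⟩

/-- The number of unlabeled interval graphs on `n` vertices. -/
noncomputable def intervalGraphCount (n : ℕ) : ℕ :=
  Nat.card (Quotient (intervalIsoSetoid n))

/-- The graph on `Fin n` where `i < j` are adjacent iff `j ≤ i + d i`. -/
def graphOfFn {n : ℕ} (d : Fin n → ℕ) : SimpleGraph (Fin n) where
  Adj i j := (i < j ∧ j.val ≤ i.val + d i) ∨ (j < i ∧ i.val ≤ j.val + d j)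
  symm := by constructor; intro i j h; tauto
  loopless := by constructor; intro i h; rcases h with ⟨h, _⟩ | ⟨h, _⟩ <;> exact lt_irrefl i h

lemma exists_graphOfFn {n : ℕ} (G : SimpleGraph (Fin n)) (hG : IsIntervalGraph G) :
    ∃ d : Fin n → ℕ, (∀ i : Fin n, i.val + d i + 1 ≤ n) ∧ Nonempty (graphOfFn d ≃g G) := by
  obtain ⟨a, b, hab, hadj⟩ := hG
  have key : ∀ i j, i ≠ j → (G.Adj i j ↔ (a j ≤ b i ∧ a i ≤ b j)) := by
    intro i j hij
    rw [hadj i j hij, Set.Icc_inter_Icc, Set.nonempty_Icc, max_le_iff, le_min_iff, le_min_iff]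
    constructor
    · rintro ⟨⟨_, h1⟩, ⟨h2, _⟩⟩; exact ⟨h2, h1⟩
    · rintro ⟨h1, h2⟩; exact ⟨⟨hab i, h2⟩, ⟨h1, hab j⟩⟩
  set σ := Tuple.sort a with hσ
  have hmono : Monotone (a ∘ σ) := Tuple.monotone_sort a
  set a' : Fin n → ℝ := a ∘ σ with ha'
  set b' : Fin n → ℝ := b ∘ σ with hb'
  set S : Fin n → Finset (Fin n) :=
    fun k => Finset.univ.filter (fun j => k < j ∧ a' j ≤ b' k) with hS
  set d : Fin n → ℕ := fun k => (S k).card with hd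
  have hdle : ∀ k : Fin n, k.val + d k + 1 ≤ n := by
    intro k
    have hsub : S k ⊆ Finset.Ioi k := by
      intro j hj
      simp only [hS, Finset.mem_filter] at hj
      exact Finset.mem_Ioi.2 hj.2.1
    have := Finset.card_le_card hsub
    rw [Fin.card_Ioi] at this
    have hk : k.val < n := k.isLt
    simp only [hd]
    omega
  have char : ∀ k j : Fin n, k < j → (a' j ≤ b' k ↔ j.val ≤ k.val + d k) := by
    intro k j hkj
    constructor
    · intro h
      have hsub : Finset.Ioc k j ⊆ S k := by
        intro j' hj'
        rw [Finset.mem_Ioc] at hj'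
        simp only [hS, Finset.mem_filter, Finset.mem_univ, true_and]
        exact ⟨hj'.1, le_trans (hmono hj'.2) h⟩
      have := Finset.card_le_card hsub
      rw [Fin.card_Ioc] at this
      have : j.val - k.val ≤ d k := this
      omega
    · intro h
      by_contra hcon
      push_neg at hcon
      have hsub : S k ⊆ Finset.Ioo k j := by
        intro j' hj'
        simp only [hS, Finset.mem_filter, Finset.mem_univ, true_and] at hj'
        rw [Finset.mem_Ioo]
        refine ⟨hj'.1, ?_⟩
        by_contra hge
        push_neg at hge
        exact absurd (le_trans (hmono hge) hj'.2) (not_le.2 hcon)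
      have := Finset.card_le_card hsub
      rw [Fin.card_Ioo] at this
      have : d k ≤ j.val - k.val - 1 := this
      have hkj' : k.val < j.val := hkj
      omega
  have main : ∀ k j : Fin n, k < j → (G.Adj (σ k) (σ j) ↔ j.val ≤ k.val + d k) := by
    intro k j hkj
    have hne : σ k ≠ σ j := fun h => (ne_of_lt hkj) (σ.injective h)
    rw [key _ _ hne]
    constructor
    · intro h; exact (char k j hkj).1 h.1
    · intro h; exact ⟨(char k j hkj).2 h, le_trans (hmono hkj.le) (hab (σ j))⟩
  have hAdj : ∀ k j : Fin n, G.Adj (σ k) (σ j) ↔ (graphOfFn d).Adj k j := by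
    intro k j
    rcases lt_trichotomy k j with h | h | h
    · rw [main k j h]
      constructor
      · intro hh; exact Or.inl ⟨h, hh⟩
      · rintro (⟨_, hh⟩ | ⟨hh, _⟩)
        · exact hh
        · exact absurd h (not_lt.2 hh.le)
    · subst h
      simp only [SimpleGraph.irrefl, false_iff]

    · rw [SimpleGraph.adj_comm, main j k h]
      constructor
      · intro hh; exact Or.inr ⟨h, hh⟩
      · rintro (⟨hh, _⟩ | ⟨_, hh⟩)
        · exact absurd h (not_lt.2 hh.le)
        · exact hh
  exact ⟨d, hdle, ⟨⟨σ, fun {k j} => hAdj k j⟩⟩⟩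

noncomputable def intervalEnc {n : ℕ} (q : Quotient (intervalIsoSetoid n)) :
    (i : Fin n) → Fin (n - i.val) :=
  fun i =>
    ⟨(exists_graphOfFn q.out.1 q.out.2).choose i, by
      have h := (exists_graphOfFn q.out.1 q.out.2).choose_spec.1 i
      omega⟩

lemma intervalEnc_injective (n : ℕ) :
    Function.Injective (intervalEnc (n := n)) := by
  intro q₁ q₂ h
  have hd : (exists_graphOfFn q₁.out.1 q₁.out.2).choose
      = (exists_graphOfFn q₂.out.1 q₂.out.2).choose := by
    funext i
    have := congrFun h i
    simpa [intervalEnc, Fin.ext_iff] using this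
  obtain ⟨e₁⟩ := (exists_graphOfFn q₁.out.1 q₁.out.2).choose_spec.2
  obtain ⟨e₂⟩ := (exists_graphOfFn q₂.out.1 q₂.out.2).choose_spec.2
  rw [hd] at e₁
  have : Nonempty (q₁.out.1 ≃g q₂.out.1) := ⟨e₁.symm.trans e₂⟩
  exact Quotient.out_equiv_out.1 this

theorem interval_graph_count_le_double_factorial (n : ℕ) (hn : 0 < n) :
    intervalGraphCount n ≤ ∏ j ∈ Finset.Icc 1 n, (2 * j - 1) := by
  have h1 : intervalGraphCount n ≤ Nat.card ((i : Fin n) → Fin (n - i.val)) :=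
    Nat.card_le_card_of_injective _ (intervalEnc_injective n)
  have h2 : Nat.card ((i : Fin n) → Fin (n - i.val)) = ∏ i : Fin n, (n - i.val) := by
    rw [Nat.card_pi]
    exact Finset.prod_congr rfl fun i _ => Nat.card_eq_fintype_card.trans (Fintype.card_fin _)
  have h3 : ∏ i : Fin n, (n - i.val) = ∏ i ∈ Finset.range n, (n - i) := by
    rw [Finset.prod_range fun i => (n - i)]
  have h4 : ∏ i ∈ Finset.range n, (n - i) = ∏ i ∈ Finset.range n, (i + 1) := by
    rw [← Finset.prod_range_reflect (fun i => i + 1) n]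
    refine Finset.prod_congr rfl fun i hi => ?_
    rw [Finset.mem_range] at hi
    omega
  have h5 : ∏ j ∈ Finset.Icc 1 n, (2 * j - 1) = ∏ i ∈ Finset.range n, (2 * (1 + i) - 1) := by
    rw [← Finset.Ico_add_one_right_eq_Icc, Finset.prod_Ico_eq_prod_range]
    norm_num
  have h6 : ∏ i ∈ Finset.range n, (i + 1) ≤ ∏ i ∈ Finset.range n, (2 * (1 + i) - 1) := by
    refine Finset.prod_le_prod' fun i _ => ?_
    omega
  calc intervalGraphCount n ≤ Nat.card ((i : Fin n) → Fin (n - i.val)) := h1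
    _ = ∏ i ∈ Finset.range n, (n - i) := by rw [h2, h3]
    _ = ∏ i ∈ Finset.range n, (i + 1) := h4
    _ ≤ ∏ i ∈ Finset.range n, (2 * (1 + i) - 1) := h6
    _ = ∏ j ∈ Finset.Icc 1 n, (2 * j - 1) := h5.symm
end

section
/- The number of unlabeled interval graphs on n vertices satisfies log I_n ≤ n log n + O(n); explicitly, there is a constant C such that log I_n ≤ n log n + C n for all n ≥ 1. -/
/-- For a monotone tuple `g`, `g j ≤ t` iff fewer than `j+1` ... -/
lemma sorted_count_lemma {n : ℕ} {g : Fin n → ℝ} (hg : Monotone g) (t : ℝ) (j : Fin n) :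
    g j ≤ t ↔ j.val < (Finset.univ.filter (fun k => g k ≤ t)).card := by
  constructor
  · intro h
    have hsub : Finset.Iic j ⊆ Finset.univ.filter (fun k => g k ≤ t) := by
      intro k hk
      simp only [Finset.mem_Iic] at hk
      simp only [Finset.mem_filter, Finset.mem_univ, true_and]
      exact le_trans (hg hk) h
    have := Finset.card_le_card hsub
    rw [Fin.card_Iic] at this
    omega
  · intro h
    by_contra hc
    push_neg at hc
    have hsub : Finset.univ.filter (fun k => g k ≤ t) ⊆ Finset.Iio j := by
      intro k hk
      simp only [Finset.mem_filter, Finset.mem_univ, true_and] at hk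
      simp only [Finset.mem_Iio]
      by_contra hk'
      push_neg at hk'
      exact absurd (le_trans (hg hk') hk) (not_le.mpr hc)
    have := Finset.card_le_card hsub
    rw [Fin.card_Iio] at this
    omega

/-- Canonical interval graph from a function `c : Fin n → Fin n`. -/
def canonGraph {n : ℕ} (c : Fin n → Fin n) : SimpleGraph (Fin n) where
  Adj i j := i ≠ j ∧ j.val ≤ max i.val (c i).val ∧ i.val ≤ max j.val (c j).val
  symm := by
    constructor
    intro i j ⟨h1, h2, h3⟩
    exact ⟨h1.symm, h3, h2⟩
  loopless := ⟨fun i h => h.1 rfl⟩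

lemma canonGraph_isInterval {n : ℕ} (c : Fin n → Fin n) : IsIntervalGraph (canonGraph c) := by
  refine ⟨fun i => ((i.val : ℕ) : ℝ), fun i => ((max i.val (c i).val : ℕ) : ℝ),
    fun i => ?_, fun i j hij => ?_⟩
  · dsimp only
    exact_mod_cast le_max_left _ _
  · rw [Set.Icc_inter_Icc, Set.nonempty_Icc, sup_le_iff, le_inf_iff, le_inf_iff]
    dsimp only
    constructor
    · intro ⟨_, h2, h3⟩
      refine ⟨⟨by exact_mod_cast le_max_left _ _, by exact_mod_cast h3⟩,
        by exact_mod_cast h2, by exact_mod_cast le_max_left _ _⟩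
    · intro ⟨⟨_, h2⟩, h3, _⟩
      exact ⟨hij, by exact_mod_cast h3, by exact_mod_cast h2⟩

lemma canonGraph_surj (n : ℕ) :
    Function.Surjective (fun c : Fin n → Fin n =>
      (Quotient.mk (intervalIsoSetoid n) ⟨canonGraph c, canonGraph_isInterval c⟩)) := by
  intro q
  induction q using Quotient.inductionOn with
  | h G =>
    obtain ⟨G, a, b, hab, hadj⟩ := G
    set σ := Tuple.sort a with hσ
    have hmono : Monotone (a ∘ σ) := Tuple.monotone_sort a
    set cnt : Fin n → ℕ := fun i =>
      (Finset.univ.filter (fun k => (a ∘ σ) k ≤ b (σ i))).card with hcnt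
    have key : ∀ i j : Fin n, (a ∘ σ) j ≤ b (σ i) ↔ j.val < cnt i := fun i j =>
      sorted_count_lemma hmono (b (σ i)) j
    have hcnt_lt : ∀ i : Fin n, i.val < cnt i := fun i => (key i i).mp (hab (σ i))
    have hcnt_le : ∀ i : Fin n, cnt i ≤ n := fun i => by
      simpa using Finset.card_le_card (Finset.filter_subset _ (Finset.univ : Finset (Fin n)))
    refine ⟨fun i => ⟨cnt i - 1, by have := hcnt_lt i; have := hcnt_le i; omega⟩, ?_⟩
    apply Quotient.sound
    refine ⟨⟨σ, fun {i j} => ?_⟩⟩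
    show G.Adj (σ i) (σ j) ↔ (canonGraph _).Adj i j
    rw [iff_comm]
    show (i ≠ j ∧ _ ∧ _) ↔ G.Adj (σ i) (σ j)
    constructor
    · intro ⟨hij, h1, h2⟩
      have hij' : σ i ≠ σ j := fun h => hij (σ.injective h)
      rw [hadj _ _ hij', Set.Icc_inter_Icc, Set.nonempty_Icc, sup_le_iff, le_inf_iff, le_inf_iff]
      have hi := hcnt_lt i
      have hj := hcnt_lt j
      simp only [max_eq_right (by omega : i.val ≤ cnt i - 1),
        max_eq_right (by omega : j.val ≤ cnt j - 1)] at h1 h2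
      have hji : (a ∘ σ) j ≤ b (σ i) := (key i j).mpr (by omega)
      have hij2 : (a ∘ σ) i ≤ b (σ j) := (key j i).mpr (by omega)
      exact ⟨⟨hab _, hij2⟩, hji, hab _⟩
    · intro hGadj
      have hij : i ≠ j := fun h => (by subst h; exact G.loopless.irrefl _ hGadj)
      have hij' : σ i ≠ σ j := fun h => hij (σ.injective h)
      rw [hadj _ _ hij', Set.Icc_inter_Icc, Set.nonempty_Icc, sup_le_iff, le_inf_iff,
        le_inf_iff] at hGadj
      obtain ⟨⟨_, hij2⟩, hji, _⟩ := hGadj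
      have hi := hcnt_lt i
      have hj := hcnt_lt j
      have h1 := (key i j).mp hji
      have h2 := (key j i).mp hij2
      exact ⟨hij, by simp; omega, by simp; omega⟩

lemma intervalGraphCount_le (n : ℕ) : intervalGraphCount n ≤ n ^ n := by
  have := Nat.card_le_card_of_surjective _ (canonGraph_surj n)
  simpa [intervalGraphCount, Nat.card_eq_fintype_card] using this

theorem log_interval_graph_count_upper :
    ∃ C : ℝ, ∀ n : ℕ, 1 ≤ n →
      Real.log (intervalGraphCount n) ≤ n * Real.log n + C * n := by
  refine ⟨0, fun n hn => ?_⟩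
  rw [zero_mul, add_zero]
  have hle : (intervalGraphCount n : ℝ) ≤ (n : ℝ) ^ n := by
    exact_mod_cast intervalGraphCount_le n
  rcases Nat.eq_zero_or_pos (intervalGraphCount n) with h | h
  · rw [h]
    simp only [Nat.cast_zero, Real.log_zero]
    exact mul_nonneg (Nat.cast_nonneg n) (Real.log_natCast_nonneg n)
  · calc Real.log (intervalGraphCount n) ≤ Real.log ((n : ℝ) ^ n) :=
        Real.log_le_log (by exact_mod_cast h) hle
      _ = n * Real.log n := Real.log_pow n n
end

section
/- For every positive integer k, I_{3k} ≥ k!/3^{3k}, where I_n is the number of unlabeled interval graphs on n vertices. -/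
/-- value of permutation, as a function on ℕ -/
def pv {k : ℕ} (π : Equiv.Perm (Fin k)) (i : ℕ) : ℕ :=
  if h : i < k then (π ⟨i, h⟩).val else 0

def blkv (k m : ℕ) : Fin 3 := if m < k then 0 else if m < 2*k then 1 else 2

def Rrel {k : ℕ} (π : Equiv.Perm (Fin k)) (u v : ℕ) : Prop :=
  (k ≤ u ∧ u < 2*k ∧ k ≤ v ∧ v < 2*k) ∨
  (u < k ∧ k ≤ v ∧ v < 2*k ∧ v - k ≤ u) ∨
  (v < k ∧ k ≤ u ∧ u < 2*k ∧ u - k ≤ v) ∨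
  (2*k ≤ u ∧ k ≤ v ∧ v < 2*k ∧ u - 2*k ≤ pv π (v - k)) ∨
  (2*k ≤ v ∧ k ≤ u ∧ u < 2*k ∧ v - 2*k ≤ pv π (u - k))

def Gp {k : ℕ} (π : Equiv.Perm (Fin k)) : SimpleGraph (Fin (3*k)) where
  Adj u v := u ≠ v ∧ Rrel π u.val v.val
  symm := by
    constructor; rintro u v ⟨h1, h2⟩
    refine ⟨h1.symm, ?_⟩
    unfold Rrel at h2 ⊢; omega
  loopless := ⟨fun v h => h.1 rfl⟩

lemma pv_lt {k : ℕ} (hk : 0 < k) (π : Equiv.Perm (Fin k)) (i : ℕ) : pv π i < k := by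
  unfold pv; split
  · exact (π _).isLt
  · exact hk

/-- left endpoints ×4 -/
def A4 {k : ℕ} (π : Equiv.Perm (Fin k)) (v : Fin (3*k)) : ℕ :=
  if v.val < k then 4*v.val else if v.val < 2*k then 4*(v.val - k) + 1 else 4*(v.val - k)

/-- right endpoints ×4 -/
def B4 {k : ℕ} (π : Equiv.Perm (Fin k)) (v : Fin (3*k)) : ℕ :=
  if v.val < k then 4*v.val + 2 else if v.val < 2*k then 4*(k + pv π (v.val - k)) + 1
  else 4*(v.val - k) + 2

lemma quarter_le {p q : ℕ} : (p : ℝ)/4 ≤ (q : ℝ)/4 ↔ p ≤ q := by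
  rw [div_le_div_iff_of_pos_right (by norm_num)]
  exact_mod_cast Iff.rfl

lemma key {k : ℕ} (hk : 0 < k) (π : Equiv.Perm (Fin k)) (u v : Fin (3*k)) (h : u.val ≠ v.val) :
    Rrel π u.val v.val ↔ (A4 π u ≤ B4 π v ∧ A4 π v ≤ B4 π u) := by
  have h1 := pv_lt hk π (u.val - k)
  have h2 := pv_lt hk π (v.val - k)
  have hu := u.isLt
  have hv := v.isLt
  unfold Rrel A4 B4
  split_ifs <;> omega

lemma Gp_interval {k : ℕ} (hk : 0 < k) (π : Equiv.Perm (Fin k)) : IsIntervalGraph (Gp π) := by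
  refine ⟨fun v => (A4 π v : ℝ)/4, fun v => (B4 π v : ℝ)/4, ?_, ?_⟩
  · intro v
    rw [quarter_le]
    unfold A4 B4
    split_ifs <;> omega
  · intro i j hij
    have hij' : i.val ≠ j.val := fun h => hij (Fin.ext h)
    rw [Set.Icc_inter_Icc, Set.nonempty_Icc]
    show (Gp π).Adj i j ↔ _
    have : (Gp π).Adj i j ↔ Rrel π i.val j.val := by
      constructor
      · exact fun h => h.2
      · exact fun h => ⟨hij, h⟩
    rw [this, key hk π i j hij', sup_le_iff, le_inf_iff, le_inf_iff, quarter_le, quarter_le,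
      quarter_le, quarter_le]
    have hii : A4 π i ≤ B4 π i := by unfold A4 B4; split_ifs <;> omega
    have hjj : A4 π j ≤ B4 π j := by unfold A4 B4; split_ifs <;> omega
    constructor
    · rintro ⟨h1, h2⟩; exact ⟨⟨hii, h1⟩, h2, hjj⟩
    · rintro ⟨⟨_, h1⟩, h2, _⟩; exact ⟨h1, h2⟩

lemma blkv_eq_zero {k m : ℕ} : blkv k m = 0 ↔ m < k := by
  unfold blkv; split_ifs <;> simp_all <;> omega

lemma blkv_eq_one {k m : ℕ} : blkv k m = 1 ↔ k ≤ m ∧ m < 2*k := by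
  unfold blkv; split_ifs <;> simp_all <;> omega

lemma blkv_eq_two {k m : ℕ} : blkv k m = 2 ↔ 2*k ≤ m := by
  unfold blkv; split_ifs <;> simp_all <;> omega

noncomputable def nbCard {k : ℕ} (G : SimpleGraph (Fin (3*k))) (u : Fin (3*k)) (c : Fin 3) : ℕ :=
  Nat.card {v : Fin (3*k) // G.Adj u v ∧ blkv k v.val = c}

lemma nbCard_iso {k : ℕ} {G H : SimpleGraph (Fin (3*k))} (ψ : G ≃g H)
    (hb : ∀ v, blkv k (ψ v).val = blkv k v.val) (u : Fin (3*k)) (c : Fin 3) :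
    nbCard G u c = nbCard H (ψ u) c := by
  apply Nat.card_congr
  refine Equiv.subtypeEquiv ψ.toEquiv (fun v => ?_)
  have : H.Adj (ψ u) (ψ v) ↔ G.Adj u v := ψ.map_adj_iff
  rw [show (ψ.toEquiv v) = ψ v from rfl, this, hb]

lemma card_range {n lo hi : ℕ} (hhi : hi ≤ n) :
    Nat.card {v : Fin n // lo ≤ v.val ∧ v.val < hi} = hi - lo := by
  have e : {v : Fin n // lo ≤ v.val ∧ v.val < hi} ≃ Fin (hi - lo) :=
    { toFun := fun v => ⟨v.val.val - lo, by omega⟩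
      invFun := fun i => ⟨⟨lo + i.val, by have := i.isLt; omega⟩,
        by have := i.isLt; simp only [Fin.val_mk]; omega⟩
      left_inv := fun v => by
        ext
        simp only []
        have := v.2
        omega
      right_inv := fun i => by
        ext
        simp only []
        omega }
  rw [Nat.card_congr e, Nat.card_eq_fintype_card, Fintype.card_fin]

lemma nbCard_zero {k : ℕ} (hk : 0 < k) (π : Equiv.Perm (Fin k)) (i : ℕ) (hi : i < k) :
    nbCard (Gp π) ⟨k + i, by omega⟩ 0 = k - i := by
  unfold nbCard
  have : ∀ v : Fin (3*k), ((Gp π).Adj ⟨k + i, by omega⟩ v ∧ blkv k v.val = 0) ↔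
      (i ≤ v.val ∧ v.val < k) := by
    intro v
    rw [blkv_eq_zero]
    show ((⟨k + i, _⟩ : Fin (3*k)) ≠ v ∧ Rrel π (k+i) v.val) ∧ _ ↔ _
    have hne : (⟨k + i, by omega⟩ : Fin (3*k)) ≠ v ↔ k + i ≠ v.val := by
      constructor
      · intro h h'; exact h (Fin.ext h'.symm).symm
      · intro h h'; exact h (congrArg Fin.val h')
    rw [hne]
    unfold Rrel
    have h1 := pv_lt hk π (k + i - k)
    have h2 := pv_lt hk π (v.val - k)
    omega
  rw [Nat.card_congr (Equiv.subtypeEquivRight this)]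
  exact card_range (by omega)

lemma nbCard_two {k : ℕ} (hk : 0 < k) (π : Equiv.Perm (Fin k)) (i : ℕ) (hi : i < k) :
    nbCard (Gp π) ⟨k + i, by omega⟩ 2 = (π ⟨i, hi⟩).val + 1 := by
  unfold nbCard
  have hπ : (π ⟨i, hi⟩).val < k := (π _).isLt
  have : ∀ v : Fin (3*k), ((Gp π).Adj ⟨k + i, by omega⟩ v ∧ blkv k v.val = 2) ↔
      (2*k ≤ v.val ∧ v.val < 2*k + (π ⟨i, hi⟩).val + 1) := by
    intro v
    rw [blkv_eq_two]
    show ((⟨k + i, _⟩ : Fin (3*k)) ≠ v ∧ Rrel π (k+i) v.val) ∧ _ ↔ _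
    have hne : (⟨k + i, by omega⟩ : Fin (3*k)) ≠ v ↔ k + i ≠ v.val := by
      constructor
      · intro h h'; exact h (Fin.ext h'.symm).symm
      · intro h h'; exact h (congrArg Fin.val h')
    rw [hne]
    unfold Rrel
    have h2 := pv_lt hk π (v.val - k)
    have hpv : pv π (k + i - k) = (π ⟨i, hi⟩).val := by
      have : k + i - k = i := by omega
      rw [this]; unfold pv; rw [dif_pos hi]
    rw [hpv]
    omega
  rw [Nat.card_congr (Equiv.subtypeEquivRight this)]
  rw [card_range (by omega)]
  omega

lemma rigid {k : ℕ} (hk : 0 < k) (π σ : Equiv.Perm (Fin k)) (ψ : Gp π ≃g Gp σ)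
    (hb : ∀ v, blkv k (ψ v).val = blkv k v.val) : π = σ := by
  ext i
  set u : Fin (3*k) := ⟨k + i.val, by omega⟩ with hu
  have hbu : blkv k (ψ u).val = 1 := by
    rw [hb u]; rw [blkv_eq_one]; constructor <;> simp [hu] <;> omega
  rw [blkv_eq_one] at hbu
  set i' : ℕ := (ψ u).val - k with hi'def
  have hi' : i' < k := by omega
  have hψu : ψ u = ⟨k + i', by omega⟩ := Fin.ext (show (ψ u).val = k + i' by omega)
  have h0 : nbCard (Gp π) u 0 = nbCard (Gp σ) (ψ u) 0 := nbCard_iso ψ hb u 0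
  rw [hψu] at h0
  rw [nbCard_zero hk π i.val i.isLt, nbCard_zero hk σ i' hi'] at h0
  have hii : i' = i.val := by omega
  have h2 : nbCard (Gp π) u 2 = nbCard (Gp σ) (ψ u) 2 := nbCard_iso ψ hb u 2
  rw [hψu] at h2
  rw [nbCard_two hk π i.val i.isLt, nbCard_two hk σ i' hi'] at h2
  have : (π ⟨i.val, i.isLt⟩).val = (σ ⟨i', hi'⟩).val := by omega
  have hieq : (⟨i', hi'⟩ : Fin k) = i := Fin.ext (show i' = i.val from hii)
  have hieq2 : (⟨i.val, i.isLt⟩ : Fin k) = i := Fin.ext rfl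
  rw [hieq, hieq2] at this
  exact this

theorem interval_graph_count_lower_factorial (k : ℕ) (hk : 0 < k) :
    (Nat.factorial k : ℝ) / 3 ^ (3 * k) ≤ (intervalGraphCount (3 * k) : ℝ) := by
  classical
  set Q := Quotient (intervalIsoSetoid (3*k)) with hQ
  letI : Fintype Q := Fintype.ofFinite _
  set F : Equiv.Perm (Fin k) → Q :=
    fun π => Quotient.mk _ ⟨Gp π, Gp_interval hk π⟩ with hF
  -- fibers of F have size at most 3^(3k)
  have hfiber : ∀ q ∈ (Finset.univ.image F),
      (Finset.univ.filter fun σ => F σ = q).card ≤ 3^(3*k) := by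
    intro q hq
    obtain ⟨π₀, _, hπ₀⟩ := Finset.mem_image.mp hq
    -- coloring map
    set col : Equiv.Perm (Fin k) → (Fin (3*k) → Fin 3) := fun σ =>
      if h : Nonempty (Gp σ ≃g Gp π₀) then fun v => blkv k (h.some.symm v).val
      else fun _ => 0 with hcol
    have hcard : (Finset.univ : Finset (Fin (3*k) → Fin 3)).card = 3^(3*k) := by
      simp [Fintype.card_fun]
    rw [← hcard]
    apply Finset.card_le_card_of_injOn col (fun σ _ => Finset.mem_univ _)
    intro σ hσ τ hτ hcoleq
    simp only [Finset.coe_filter, Set.mem_setOf_eq, Finset.mem_univ, true_and] at hσ hτ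
    have hσ' : Nonempty (Gp σ ≃g Gp π₀) := by
      have := Quotient.exact (hσ.trans hπ₀.symm)
      exact this
    have hτ' : Nonempty (Gp τ ≃g Gp π₀) := by
      have := Quotient.exact (hτ.trans hπ₀.symm)
      exact this
    rw [hcol] at hcoleq
    simp only [dif_pos hσ', dif_pos hτ'] at hcoleq
    set ψσ := hσ'.some with hψσ
    set ψτ := hτ'.some with hψτ
    have hco : ∀ v, blkv k (ψσ.symm v).val = blkv k (ψτ.symm v).val := fun v =>
      congrFun hcoleq v
    refine rigid hk σ τ (ψσ.trans ψτ.symm) (fun w => ?_)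
    have := hco (ψσ w)
    simpa using this.symm
  have hmain : (Finset.univ : Finset (Equiv.Perm (Fin k))).card ≤
      3^(3*k) * (Finset.univ.image F).card :=
    Finset.card_le_mul_card_image _ _ hfiber
  have h1 : (Finset.univ : Finset (Equiv.Perm (Fin k))).card = Nat.factorial k := by
    rw [Finset.card_univ, Fintype.card_perm, Fintype.card_fin]
  have h2 : (Finset.univ.image F).card ≤ intervalGraphCount (3*k) := by
    have : intervalGraphCount (3*k) = Fintype.card Q := by
      rw [intervalGraphCount, Nat.card_eq_fintype_card]
    rw [this]
    exact Finset.card_le_univ _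
  have hnat : Nat.factorial k ≤ 3^(3*k) * intervalGraphCount (3*k) := by
    calc Nat.factorial k = _ := h1.symm
      _ ≤ 3^(3*k) * (Finset.univ.image F).card := hmain
      _ ≤ 3^(3*k) * intervalGraphCount (3*k) := Nat.mul_le_mul_left _ h2
  rw [div_le_iff₀ (by positivity)]
  calc (Nat.factorial k : ℝ) ≤ ((3:ℝ)^(3*k) * (intervalGraphCount (3*k) : ℝ)) := by
        exact_mod_cast hnat
    _ = _ := by ring
end

section
/- For every n and every k with 2k < n, I_n · 3^n ≥ C(k², n-2k), where I_n is the number of unlabeled interval graphs on n vertices and C(k², n-2k) is the binomial coefficient. -/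
open Finset

namespace IG

variable {k r n : ℕ}

abbrev V (k r : ℕ) := Fin k ⊕ (Fin k ⊕ Fin r)

noncomputable def ia (f : Fin r → Fin k × Fin k) : V k r → ℝ
  | .inl _ => 0
  | .inr (.inl j) => (k : ℝ) + 1 + j.val
  | .inr (.inr t) => ((f t).1.val : ℝ) + 1/2

noncomputable def ib (f : Fin r → Fin k × Fin k) : V k r → ℝ
  | .inl i => (i.val : ℝ) + 1
  | .inr (.inl _) => 2*(k:ℝ) + 2
  | .inr (.inr t) => (k : ℝ) + ((f t).2.val : ℝ) + 3/2

lemma fin_cast_lt (m : Fin k) : (m.val : ℝ) < k := by exact_mod_cast m.isLt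

lemma ia_le_ib (f : Fin r → Fin k × Fin k) : ∀ v, ia f v ≤ ib f v := by
  rintro (i | j | t) <;> simp only [ia, ib]
  · positivity
  · have := fin_cast_lt j; linarith
  · have := fin_cast_lt (f t).1
    have h2 : (0:ℝ) ≤ ((f t).2.val : ℝ) := by positivity
    linarith

def G0 (f : Fin r → Fin k × Fin k) : SimpleGraph (V k r) where
  Adj x y := x ≠ y ∧ ia f x ≤ ib f y ∧ ia f y ≤ ib f x
  symm := ⟨by rintro x y ⟨h1, h2, h3⟩; exact ⟨h1.symm, h3, h2⟩⟩
  loopless := ⟨by rintro x ⟨h1, -⟩; exact h1 rfl⟩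

lemma adj_iff_nonempty (f : Fin r → Fin k × Fin k) (x y : V k r) (hxy : x ≠ y) :
    (G0 f).Adj x y ↔ (Set.Icc (ia f x) (ib f x) ∩ Set.Icc (ia f y) (ib f y)).Nonempty := by
  rw [Set.Icc_inter_Icc, Set.nonempty_Icc, sup_le_iff, le_inf_iff, le_inf_iff]
  have hx := ia_le_ib f x; have hy := ia_le_ib f y
  constructor
  · rintro ⟨-, h1, h2⟩; exact ⟨⟨hx, h1⟩, h2, hy⟩
  · rintro ⟨⟨-, h1⟩, h2, -⟩; exact ⟨hxy, h1, h2⟩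

lemma adj_RP (f : Fin r → Fin k × Fin k) (i : Fin k) (t : Fin r) :
    (G0 f).Adj (.inl i) (.inr (.inr t)) ↔ (f t).1 ≤ i := by
  constructor
  · rintro ⟨-, -, hb⟩
    simp only [ia, ib] at hb
    have h1 : ((f t).1.val : ℝ) < i.val + 1 := by linarith
    have h2 : (f t).1.val < i.val + 1 := by exact_mod_cast h1
    exact Fin.le_def.mpr (Nat.lt_add_one_iff.mp h2)
  · intro hle
    have h1 : ((f t).1.val : ℝ) ≤ i.val := by exact_mod_cast Fin.le_def.mp hle
    have h2 : (0:ℝ) ≤ ((f t).2.val : ℝ) := by positivity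
    refine ⟨by simp, ?_, ?_⟩ <;> simp only [ia, ib] <;> [positivity; linarith]

lemma adj_CP (f : Fin r → Fin k × Fin k) (j : Fin k) (t : Fin r) :
    (G0 f).Adj (.inr (.inl j)) (.inr (.inr t)) ↔ j ≤ (f t).2 := by
  constructor
  · rintro ⟨-, ha, -⟩
    simp only [ia, ib] at ha
    have h1 : (j.val : ℝ) < (f t).2.val + 1 := by linarith
    have h2 : j.val < (f t).2.val + 1 := by exact_mod_cast h1
    exact Fin.le_def.mpr (Nat.lt_add_one_iff.mp h2)
  · intro hle
    have h1 : (j.val : ℝ) ≤ (f t).2.val := by exact_mod_cast Fin.le_def.mp hle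
    have h2 := fin_cast_lt (f t).1
    refine ⟨by simp, ?_, ?_⟩ <;> simp only [ia, ib] <;> linarith

lemma not_adj_RC (f : Fin r → Fin k × Fin k) (i j : Fin k) :
    ¬ (G0 f).Adj (.inl i) (.inr (.inl j)) := by
  rintro ⟨-, -, ha⟩
  simp only [ia, ib] at ha
  have h1 := fin_cast_lt i
  have h2 : (0:ℝ) ≤ (j.val : ℝ) := by positivity
  linarith

lemma not_adj_RCpt (f : Fin r → Fin k × Fin k) (i j : Fin k) :
    ¬ (G0 f).Adj (.inr (.inl j)) (.inl i) := fun h => not_adj_RC f i j h.symm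

-- the graph on Fin n
variable (hn : k + (k + r) = n)

def eV (hn : k + (k + r) = n) : V k r ≃ Fin n :=
  (Equiv.sumCongr (Equiv.refl (Fin k)) finSumFinEquiv).trans
    (finSumFinEquiv.trans (finCongr hn))

def Gn (f : Fin r → Fin k × Fin k) (hn : k + (k + r) = n) : SimpleGraph (Fin n) :=
  (G0 f).comap (eV hn).symm

lemma Gn_adj (f : Fin r → Fin k × Fin k) (x y : Fin n) :
    (Gn f hn).Adj x y ↔ (G0 f).Adj ((eV hn).symm x) ((eV hn).symm y) := Iff.rfl

lemma isIntervalGraph_Gn (f : Fin r → Fin k × Fin k) : IsIntervalGraph (Gn f hn) := by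
  refine ⟨ia f ∘ (eV hn).symm, ib f ∘ (eV hn).symm, fun i => ia_le_ib f _, fun i j hij => ?_⟩
  exact adj_iff_nonempty f _ _ ((eV hn).symm.injective.ne hij)

def col : V k r → Fin 3
  | .inl _ => 0
  | .inr (.inl _) => 1
  | .inr (.inr _) => 2

def cn (hn : k + (k + r) = n) : Fin n → Fin 3 := fun v => col ((eV hn).symm v)

open scoped Classical in
noncomputable def recover (k : ℕ) (H : SimpleGraph (Fin n)) (χ : Fin n → Fin 3) :
    Finset (ℕ × ℕ) :=
  (univ.filter (fun v => χ v = 2)).image (fun v =>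
    (k - #(univ.filter (fun w => χ w = 0 ∧ H.Adj v w)),
     #(univ.filter (fun w => χ w = 1 ∧ H.Adj v w)) - 1))

open scoped Classical in
lemma recover_comp (H H' : SimpleGraph (Fin n)) (φ : H ≃g H') (χ : Fin n → Fin 3) :
    recover k H (fun v => χ (φ v)) = recover k H' χ := by
  have hcard : ∀ (c : Fin 3) (v : Fin n),
      #(univ.filter (fun w => χ (φ w) = c ∧ H.Adj v w)) =
      #(univ.filter (fun w => χ w = c ∧ H'.Adj (φ v) w)) := by
    intro c v
    refine Finset.card_equiv φ.toEquiv (fun w => ?_)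
    simp only [mem_filter, mem_univ, true_and, RelIso.coe_fn_toEquiv]
    constructor
    · rintro ⟨h1, h2⟩; exact ⟨h1, φ.map_adj_iff.mpr h2⟩
    · rintro ⟨h1, h2⟩; exact ⟨h1, φ.map_adj_iff.mp h2⟩
  unfold recover
  ext p
  simp only [mem_image, mem_filter, mem_univ, true_and]
  constructor
  · rintro ⟨v, hv, rfl⟩
    exact ⟨φ v, hv, by rw [← hcard 0 v, ← hcard 1 v]⟩
  · rintro ⟨u, hu, rfl⟩
    refine ⟨φ.symm u, ?_, ?_⟩
    · simpa using hu
    · rw [hcard 0 (φ.symm u), hcard 1 (φ.symm u)]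
      simp



open scoped Classical in
lemma pt_row_card (f : Fin r → Fin k × Fin k) (t : Fin r) :
    #(univ.filter (fun w : Fin n => cn hn w = 0 ∧ (Gn f hn).Adj (eV hn (.inr (.inr t))) w))
      = k - (f t).1.val := by
  have himg : (univ.filter (fun w : Fin n => cn hn w = 0 ∧ (Gn f hn).Adj (eV hn (.inr (.inr t))) w))
      = (Finset.Ici (f t).1).image (fun i => eV hn (.inl i)) := by
    ext w
    simp only [mem_filter, mem_univ, true_and, mem_image, Finset.mem_Ici]
    constructor
    · rintro ⟨h0, hadj⟩
      rcases hv : (eV hn).symm w with i | j | t'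
      · refine ⟨i, ?_, ?_⟩
        · rw [Gn_adj, Equiv.symm_apply_apply, hv] at hadj
          exact (adj_RP f i t).mp hadj.symm
        · rw [← hv, Equiv.apply_symm_apply]
      · exfalso; unfold cn at h0; rw [hv] at h0; simp [col] at h0
      · exfalso; unfold cn at h0; rw [hv] at h0; simp [col] at h0
    · rintro ⟨i, hle, rfl⟩
      refine ⟨?_, ?_⟩
      · unfold cn; rw [Equiv.symm_apply_apply]; rfl
      · rw [Gn_adj, Equiv.symm_apply_apply, Equiv.symm_apply_apply]
        exact ((adj_RP f i t).mpr hle).symm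
  rw [himg, Finset.card_image_of_injective _
    (fun a b hab => Sum.inl_injective ((eV hn).injective hab)), Fin.card_Ici]

open scoped Classical in
lemma pt_col_card (f : Fin r → Fin k × Fin k) (t : Fin r) :
    #(univ.filter (fun w : Fin n => cn hn w = 1 ∧ (Gn f hn).Adj (eV hn (.inr (.inr t))) w))
      = (f t).2.val + 1 := by
  have himg : (univ.filter (fun w : Fin n => cn hn w = 1 ∧ (Gn f hn).Adj (eV hn (.inr (.inr t))) w))
      = (Finset.Iic (f t).2).image (fun j => eV hn (.inr (.inl j))) := by
    ext w
    simp only [mem_filter, mem_univ, true_and, mem_image, Finset.mem_Iic]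
    constructor
    · rintro ⟨h0, hadj⟩
      rcases hv : (eV hn).symm w with i | j | t'
      · exfalso; unfold cn at h0; rw [hv] at h0; simp [col] at h0
      · refine ⟨j, ?_, ?_⟩
        · rw [Gn_adj, Equiv.symm_apply_apply, hv] at hadj
          exact (adj_CP f j t).mp hadj.symm
        · rw [← hv, Equiv.apply_symm_apply]
      · exfalso; unfold cn at h0; rw [hv] at h0; simp [col] at h0
    · rintro ⟨j, hle, rfl⟩
      refine ⟨?_, ?_⟩
      · unfold cn; rw [Equiv.symm_apply_apply]; rfl
      · rw [Gn_adj, Equiv.symm_apply_apply, Equiv.symm_apply_apply]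
        exact ((adj_CP f j t).mpr hle).symm
  rw [himg, Finset.card_image_of_injective _
    (fun a b hab => Sum.inr_injective ((eV hn).injective hab) |> Sum.inl_injective),
    Fin.card_Iic]

open scoped Classical in
lemma recover_base (f : Fin r → Fin k × Fin k) :
    recover k (Gn f hn) (cn hn)
      = univ.image (fun t : Fin r => ((f t).1.val, (f t).2.val)) := by
  unfold recover
  have h2 : (univ.filter fun v : Fin n => cn hn v = 2)
      = univ.image (fun t : Fin r => eV hn (.inr (.inr t))) := by
    ext v
    simp only [mem_filter, mem_univ, true_and, mem_image]
    constructor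
    · intro h0
      rcases hv : (eV hn).symm v with i | j | t
      · exfalso; unfold cn at h0; rw [hv] at h0; simp [col] at h0
      · exfalso; unfold cn at h0; rw [hv] at h0; simp [col] at h0
      · exact ⟨t, by rw [← hv, Equiv.apply_symm_apply]⟩
    · rintro ⟨t, rfl⟩
      unfold cn; rw [Equiv.symm_apply_apply]; rfl
  rw [h2, Finset.image_image]
  refine Finset.image_congr ?_
  intro t _
  simp only [Function.comp_apply]
  rw [pt_row_card hn f t, pt_col_card hn f t,
    Nat.sub_sub_self (f t).1.isLt.le, Nat.add_sub_cancel]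

end IG

theorem interval_graph_count_times_three_pow (n k : ℕ) (h : 2 * k < n) :
    (k ^ 2).choose (n - 2 * k) ≤ intervalGraphCount n * 3 ^ n := by
  classical
  set r := n - 2 * k with hr
  have hn : k + (k + r) = n := by omega
  let T := {S : Finset (Fin k × Fin k) // S.card = r}
  have hT : Nat.card T = (k ^ 2).choose r := by
    rw [Nat.card_eq_fintype_card, Fintype.card_finset_len]
    congr 1
    rw [Fintype.card_prod, Fintype.card_fin, ← pow_two]
  let fS : T → (Fin r → Fin k × Fin k) :=
    fun S t => ((S.1.equivFinOfCardEq S.2).symm t : Fin k × Fin k)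
  let q : T → Quotient (intervalIsoSetoid n) :=
    fun S => Quotient.mk (intervalIsoSetoid n) ⟨IG.Gn (fS S) hn, IG.isIntervalGraph_Gn hn (fS S)⟩
  let φ : (S : T) → ((q S).out.1 ≃g IG.Gn (fS S) hn) :=
    fun S => Nonempty.some (@Quotient.mk_out _ (intervalIsoSetoid n)
      (⟨IG.Gn (fS S) hn, IG.isIntervalGraph_Gn hn (fS S)⟩ :
        {G : SimpleGraph (Fin n) // IsIntervalGraph G}))
  let Φ : T → Quotient (intervalIsoSetoid n) × (Fin n → Fin 3) :=
    fun S => (q S, fun v => IG.cn hn (φ S v))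
  have key : ∀ S : T, IG.recover k ((q S).out.1) (fun v => IG.cn hn (φ S v))
      = S.1.image (fun p => (p.1.val, p.2.val)) := by
    intro S
    rw [IG.recover_comp ((q S).out.1) (IG.Gn (fS S) hn) (φ S) (IG.cn hn),
      IG.recover_base hn (fS S)]
    have himg : univ.image (fS S) = S.1 := by
      ext p
      simp only [Finset.mem_image, Finset.mem_univ, true_and]
      constructor
      · rintro ⟨t, rfl⟩; exact ((S.1.equivFinOfCardEq S.2).symm t).2
      · intro hp; exact ⟨S.1.equivFinOfCardEq S.2 ⟨p, hp⟩, by simp [fS]⟩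
    rw [← himg, Finset.image_image]
    rfl
  have hinj : Function.Injective Φ := by
    intro S S' hSS
    have h1 : q S = q S' := congrArg Prod.fst hSS
    have h2 : (fun v => IG.cn hn (φ S v)) = (fun v => IG.cn hn (φ S' v)) :=
      congrArg Prod.snd hSS
    have himg : S.1.image (fun p : Fin k × Fin k => (p.1.val, p.2.val))
        = S'.1.image (fun p : Fin k × Fin k => (p.1.val, p.2.val)) := by
      calc S.1.image (fun p : Fin k × Fin k => (p.1.val, p.2.val))
          = IG.recover k ((q S).out.1) (fun v => IG.cn hn (φ S v)) := (key S).symm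
        _ = IG.recover k ((q S').out.1) (fun v => IG.cn hn (φ S' v)) := by rw [h2, h1]
        _ = S'.1.image (fun p : Fin k × Fin k => (p.1.val, p.2.val)) := key S'
    have hembinj : Function.Injective (fun p : Fin k × Fin k => (p.1.val, p.2.val)) := by
      rintro ⟨a, b⟩ ⟨c, d⟩ hpq
      simp only [Prod.mk.injEq] at hpq ⊢
      exact ⟨Fin.ext hpq.1, Fin.ext hpq.2⟩
    exact Subtype.ext (Finset.image_injective hembinj himg)
  calc (k ^ 2).choose r = Nat.card T := hT.symm
    _ ≤ Nat.card (Quotient (intervalIsoSetoid n) × (Fin n → Fin 3)) :=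
        Nat.card_le_card_of_injective Φ hinj
    _ = intervalGraphCount n * 3 ^ n := by
        rw [Nat.card_prod, Nat.card_fun]
        simp [intervalGraphCount, Nat.card_eq_fintype_card]
end

section
/- The number I_n of unlabeled interval graphs on n vertices satisfies log I_n ≥ n log n - 2n log log n - O(n); explicitly, there exist constants C and N such that for all n ≥ N, log I_n ≥ n log n - 2n log log n - C n. -/
open Set

noncomputable def ivA {n : ℕ} (k : ℕ) (f : Fin n → Fin k × Fin k) (i : Fin n) : ℝ :=
  if (i:ℕ) < k then -(((i:ℕ):ℝ) + 1)
  else if (i:ℕ) < 2*k then ((i:ℕ) : ℝ) - k + 1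
  else -((((f i).1 : ℕ):ℝ) + 1)

noncomputable def ivB {n : ℕ} (k : ℕ) (f : Fin n → Fin k × Fin k) (i : Fin n) : ℝ :=
  if (i:ℕ) < k then -(((i:ℕ):ℝ) + 1)
  else if (i:ℕ) < 2*k then ((i:ℕ) : ℝ) - k + 1
  else (((f i).2 : ℕ):ℝ) + 1

lemma ivA_le_ivB {n : ℕ} (k : ℕ) (f : Fin n → Fin k × Fin k) (i : Fin n) :
    ivA k f i ≤ ivB k f i := by
  unfold ivA ivB
  split_ifs with h1 h2
  · exact le_refl _
  · exact le_refl _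
  · have h1 : (0:ℝ) ≤ (((f i).1 : ℕ):ℝ) := by positivity
    have h2 : (0:ℝ) ≤ (((f i).2 : ℕ):ℝ) := by positivity
    linarith

noncomputable def gph {n : ℕ} (k : ℕ) (f : Fin n → Fin k × Fin k) : SimpleGraph (Fin n) where
  Adj i j := i ≠ j ∧ (Icc (ivA k f i) (ivB k f i) ∩ Icc (ivA k f j) (ivB k f j)).Nonempty
  symm := by
    constructor
    rintro i j ⟨h1, h2⟩
    exact ⟨h1.symm, by rwa [Set.inter_comm]⟩
  loopless := by constructor; rintro i ⟨h, -⟩; exact h rfl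

lemma gph_isInterval {n : ℕ} (k : ℕ) (f : Fin n → Fin k × Fin k) :
    IsIntervalGraph (gph k f) := by
  refine ⟨ivA k f, ivB k f, ivA_le_ivB k f, fun i j hij => ?_⟩
  simp [gph, hij]

-- adjacency of a small vertex with a left long vertex
lemma adj_left {n k : ℕ} (f : Fin n → Fin k × Fin k) (i t : Fin n)
    (hi : 2*k ≤ (i:ℕ)) (ht : (t:ℕ) < k) :
    (gph k f).Adj i t ↔ ((t:ℕ) ≤ ((f i).1 : ℕ)) := by
  have hne : i ≠ t := by
    intro h; subst h; omega
  have hik : ¬ (i:ℕ) < k := by omega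
  have hik2 : ¬ (i:ℕ) < 2*k := by omega
  simp only [gph, hne, Ne, not_false_iff, true_and]
  rw [show ivA k f t = -(((t:ℕ):ℝ) + 1) by simp [ivA, ht],
      show ivB k f t = -(((t:ℕ):ℝ) + 1) by simp [ivB, ht],
      show ivA k f i = -((((f i).1 : ℕ):ℝ) + 1) by simp [ivA, hik, hik2],
      show ivB k f i = (((f i).2 : ℕ):ℝ) + 1 by simp [ivB, hik, hik2]]
  rw [Set.Icc_self, Set.inter_comm]
  rw [Set.singleton_inter_nonempty, Set.mem_Icc]
  constructor
  · rintro ⟨h1, h2⟩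
    have : ((t:ℕ):ℝ) ≤ (((f i).1 : ℕ):ℝ) := by linarith
    exact_mod_cast this
  · intro h
    have h' : ((t:ℕ):ℝ) ≤ (((f i).1 : ℕ):ℝ) := by exact_mod_cast h
    constructor
    · linarith
    · have : (0:ℝ) ≤ (((f i).2 : ℕ):ℝ) := by positivity
      have : (0:ℝ) ≤ ((t:ℕ):ℝ) := by positivity
      linarith

lemma adj_right {n k : ℕ} (f : Fin n → Fin k × Fin k) (i t : Fin n)
    (hi : 2*k ≤ (i:ℕ)) (ht1 : k ≤ (t:ℕ)) (ht2 : (t:ℕ) < 2*k) :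
    (gph k f).Adj i t ↔ ((t:ℕ) - k ≤ ((f i).2 : ℕ)) := by
  have hne : i ≠ t := by intro h; subst h; omega
  have hik : ¬ (i:ℕ) < k := by omega
  have hik2 : ¬ (i:ℕ) < 2*k := by omega
  have htk : ¬ (t:ℕ) < k := by omega
  simp only [gph, hne, Ne, not_false_iff, true_and]
  rw [show ivA k f t = ((t:ℕ):ℝ) - k + 1 by simp [ivA, htk, ht2],
      show ivB k f t = ((t:ℕ):ℝ) - k + 1 by simp [ivB, htk, ht2],
      show ivA k f i = -((((f i).1 : ℕ):ℝ) + 1) by simp [ivA, hik, hik2],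
      show ivB k f i = (((f i).2 : ℕ):ℝ) + 1 by simp [ivB, hik, hik2]]
  rw [Set.Icc_self, Set.inter_comm]
  rw [Set.singleton_inter_nonempty, Set.mem_Icc]
  have hck : ((t:ℕ):ℝ) - (k:ℝ) = (((t:ℕ) - k : ℕ):ℝ) := by
    rw [Nat.cast_sub ht1]
  constructor
  · rintro ⟨h1, h2⟩
    have : (((t:ℕ) - k : ℕ):ℝ) ≤ (((f i).2 : ℕ):ℝ) := by rw [← hck]; linarith
    exact_mod_cast this
  · intro h
    have h' : (((t:ℕ) - k : ℕ):ℝ) ≤ (((f i).2 : ℕ):ℝ) := by exact_mod_cast h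
    rw [← hck] at h'
    constructor
    · have h0 : (0:ℝ) ≤ (((f i).1 : ℕ):ℝ) := by positivity
      have hk' : (k:ℝ) ≤ ((t:ℕ):ℝ) := by exact_mod_cast ht1
      linarith
    · linarith

lemma gph_inj {n k : ℕ} (hkn : 2*k ≤ n) {f g : Fin n → Fin k × Fin k}
    (h : gph k f = gph k g) (i : Fin n) (hi : 2*k ≤ (i:ℕ)) : f i = g i := by
  have hk : 0 < k := by
    rcases Nat.eq_zero_or_pos k with h0 | h0
    · exfalso; exact absurd ((f i).1.2) (by omega)
    · exact h0
  have hadj : ∀ t : Fin n, (gph k f).Adj i t ↔ (gph k g).Adj i t := by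
    intro t; rw [h]
  have h1 : (f i).1 = (g i).1 := by
    have hp : ((f i).1 : ℕ) < n := by have := (f i).1.2; omega
    have hp' : ((g i).1 : ℕ) < n := by have := (g i).1.2; omega
    have e1 := (adj_left g i ⟨((f i).1 : ℕ), hp⟩ hi (f i).1.2).mp
      ((hadj _).mp ((adj_left f i ⟨((f i).1 : ℕ), hp⟩ hi (f i).1.2).mpr le_rfl))
    have e2 := (adj_left f i ⟨((g i).1 : ℕ), hp'⟩ hi (g i).1.2).mp
      ((hadj _).mpr ((adj_left g i ⟨((g i).1 : ℕ), hp'⟩ hi (g i).1.2).mpr le_rfl))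
    exact Fin.ext (by simp at e1 e2; omega)
  have h2 : (f i).2 = (g i).2 := by
    have hq : k + ((f i).2 : ℕ) < n := by have := (f i).2.2; omega
    have hq' : k + ((g i).2 : ℕ) < n := by have := (g i).2.2; omega
    have l1 : k ≤ ((⟨k + ((f i).2 : ℕ), hq⟩ : Fin n) : ℕ) := by simp
    have l2 : ((⟨k + ((f i).2 : ℕ), hq⟩ : Fin n) : ℕ) < 2*k := by have := (f i).2.2; simp; omega
    have l1' : k ≤ ((⟨k + ((g i).2 : ℕ), hq'⟩ : Fin n) : ℕ) := by simp
    have l2' : ((⟨k + ((g i).2 : ℕ), hq'⟩ : Fin n) : ℕ) < 2*k := by have := (g i).2.2; simp; omega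
    have e1 := (adj_right g i _ hi l1 l2).mp
      ((hadj _).mp ((adj_right f i _ hi l1 l2).mpr (by simp)))
    have e2 := (adj_right f i _ hi l1' l2').mp
      ((hadj _).mpr ((adj_right g i _ hi l1' l2').mpr (by simp)))
    exact Fin.ext (by simp at e1 e2; omega)
  exact Prod.ext h1 h2


noncomputable def phiMap (n : ℕ) :
    {G : SimpleGraph (Fin n) // IsIntervalGraph G} →
      Quotient (intervalIsoSetoid n) × Equiv.Perm (Fin n) :=
  fun G =>
    ⟨Quotient.mk _ G, (Classical.choice (Quotient.mk_out (s := intervalIsoSetoid n) G)).toEquiv⟩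

lemma phiMap_key {n : ℕ} (G : {G : SimpleGraph (Fin n) // IsIntervalGraph G}) (i j : Fin n) :
    G.1.Adj i j ↔
      ((Quotient.mk (intervalIsoSetoid n) G).out).1.Adj
        (((phiMap n G).2).symm i) (((phiMap n G).2).symm j) :=
  ((Classical.choice (Quotient.mk_out (s := intervalIsoSetoid n) G)).symm.map_adj_iff).symm

lemma card_subtype_le (n : ℕ) :
    Nat.card {G : SimpleGraph (Fin n) // IsIntervalGraph G}
      ≤ intervalGraphCount n * n.factorial := by
  classical
  have hΦ : Function.Injective (phiMap n) := by
    intro G G' h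
    have h1 : (Quotient.mk (intervalIsoSetoid n) G) = Quotient.mk _ G' := (Prod.ext_iff.mp h).1
    have h2 : (phiMap n G).2 = (phiMap n G').2 := (Prod.ext_iff.mp h).2
    apply Subtype.ext
    ext i j
    rw [phiMap_key G i j, phiMap_key G' i j, h1, h2]
  calc Nat.card {G : SimpleGraph (Fin n) // IsIntervalGraph G}
      ≤ Nat.card (Quotient (intervalIsoSetoid n) × Equiv.Perm (Fin n)) :=
        Nat.card_le_card_of_injective (phiMap n) hΦ
    _ = intervalGraphCount n * n.factorial := by
        rw [Nat.card_prod]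
        congr 1
        rw [Nat.card_eq_fintype_card, Fintype.card_perm, Fintype.card_fin]


lemma key_count {n k : ℕ} (hk : 0 < k) (hkn : 2*k ≤ n) :
    (k*k)^(n-2*k) ≤ intervalGraphCount n * n.factorial := by
  classical
  let ext : (Fin (n-2*k) → Fin k × Fin k) → (Fin n → Fin k × Fin k) :=
    fun f i => if h : 2*k ≤ (i:ℕ) then f ⟨(i:ℕ)-2*k, by omega⟩ else (⟨0,hk⟩,⟨0,hk⟩)
  let Φ : (Fin (n-2*k) → Fin k × Fin k) → {G : SimpleGraph (Fin n) // IsIntervalGraph G} :=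
    fun f => ⟨gph k (ext f), gph_isInterval _ _⟩
  have hΦ : Function.Injective Φ := by
    intro f g h
    funext j
    have hj : (j:ℕ) < n - 2*k := j.2
    have hgr : gph k (ext f) = gph k (ext g) := congrArg Subtype.val h
    have hi : 2*k ≤ (((⟨(j:ℕ) + 2*k, by omega⟩ : Fin n)):ℕ) := by simp
    have := gph_inj hkn hgr ⟨(j:ℕ) + 2*k, by omega⟩ hi
    simpa [ext, Fin.ext_iff] using this
  calc (k*k)^(n-2*k) = Nat.card (Fin (n-2*k) → Fin k × Fin k) := by
        simp [Nat.card_eq_fintype_card, Fintype.card_prod]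
    _ ≤ Nat.card {G : SimpleGraph (Fin n) // IsIntervalGraph G} :=
        Nat.card_le_card_of_injective Φ hΦ
    _ ≤ intervalGraphCount n * n.factorial := card_subtype_le n

theorem log_interval_graph_count_lower :
    ∃ (C : ℝ) (N : ℕ), ∀ n : ℕ, N ≤ n →
      (n : ℝ) * Real.log n - 2 * n * Real.log (Real.log n) - C * n ≤
        Real.log (intervalGraphCount n) := by
  refine ⟨4 + 2*Real.log 2, 16, fun n hn => ?_⟩
  have hn16 : (16:ℝ) ≤ (n:ℝ) := by exact_mod_cast hn
  have hn0 : (0:ℝ) < n := by linarith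
  set L := Real.log n with hLdef
  have hL2 : (2:ℝ) ≤ L := by
    have h16 : Real.log 16 ≤ L := Real.log_le_log (by norm_num) hn16
    have he : Real.log 16 = 4 * Real.log 2 := by
      rw [show (16:ℝ) = 2^4 by norm_num, Real.log_pow]; norm_num
    nlinarith [Real.log_two_gt_d9]
  have hL0 : (0:ℝ) < L := by linarith
  have h2Ln : 2*L ≤ (n:ℝ) := by
    have hs : Real.sqrt n * Real.sqrt n = (n:ℝ) := Real.mul_self_sqrt (le_of_lt hn0)
    have hs4 : (4:ℝ) ≤ Real.sqrt n := by
      rw [show (4:ℝ) = Real.sqrt 16 by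
        rw [show (16:ℝ) = 4^2 by norm_num, Real.sqrt_sq (by norm_num)]]
      exact Real.sqrt_le_sqrt hn16
    have hs0 : (0:ℝ) < Real.sqrt n := by linarith
    have hlogs : L = 2 * Real.log (Real.sqrt n) := by
      rw [hLdef, Real.log_sqrt (le_of_lt hn0)]; ring
    have hle : Real.log (Real.sqrt n) ≤ Real.sqrt n - 1 := Real.log_le_sub_one_of_pos hs0
    nlinarith
  set k := ⌊(n:ℝ)/L⌋₊ with hkdef
  have hdiv_pos : (0:ℝ) < (n:ℝ)/L := by positivity
  have hk_ub : (k:ℝ) ≤ (n:ℝ)/L := Nat.floor_le (le_of_lt hdiv_pos)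
  have hk_lb : (n:ℝ)/L - 1 < (k:ℝ) := Nat.sub_one_lt_floor _
  have hx1 : (1:ℝ) ≤ (n:ℝ)/(2*L) := by rw [le_div_iff₀ (by positivity)]; linarith
  have h_half : (n:ℝ)/(2*L) ≤ (k:ℝ) := by
    have hsplit : (n:ℝ)/L = 2 * ((n:ℝ)/(2*L)) := by field_simp
    linarith
  have hk_pos : 0 < k := by
    apply Nat.floor_pos.mpr
    rw [le_div_iff₀ hL0]; linarith
  have hkR : (0:ℝ) < (k:ℝ) := by exact_mod_cast hk_pos
  have hkL : (k:ℝ) * L ≤ (n:ℝ) := by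
    calc (k:ℝ) * L ≤ ((n:ℝ)/L) * L := by nlinarith
      _ = n := by field_simp
  have h2k_n : 2*k ≤ n := by
    have : (2*(k:ℝ)) ≤ (n:ℝ) := by nlinarith
    exact_mod_cast this
  have hkey := key_count hk_pos h2k_n
  have hI_pos : 0 < intervalGraphCount n := by
    have hp : 0 < (k*k)^(n-2*k) := pow_pos (Nat.mul_pos hk_pos hk_pos) _
    rcases Nat.eq_zero_or_pos (intervalGraphCount n) with h0 | h0
    · rw [h0, zero_mul] at hkey; omega
    · exact h0
  have hF_pos : 0 < n.factorial := Nat.factorial_pos n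
  -- logs
  have hlogfact : Real.log (n.factorial) ≤ (n:ℝ) * L := by
    have h1 : ((n.factorial : ℕ):ℝ) ≤ (n:ℝ)^n := by exact_mod_cast Nat.factorial_le_pow n
    calc Real.log (n.factorial) ≤ Real.log ((n:ℝ)^n) :=
          Real.log_le_log (by exact_mod_cast hF_pos) h1
      _ = (n:ℝ) * L := by rw [Real.log_pow]
  have hmain : ((n - 2*k : ℕ):ℝ) * (2 * Real.log k) ≤
      Real.log (intervalGraphCount n) + Real.log (n.factorial) := by
    have h1 : (((k*k)^(n-2*k) : ℕ):ℝ) ≤ ((intervalGraphCount n * n.factorial : ℕ):ℝ) := by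
      exact_mod_cast hkey
    have hcast : (((k*k)^(n-2*k) : ℕ):ℝ) = ((k:ℝ)*(k:ℝ))^(n-2*k) := by push_cast; ring
    have h2 : Real.log (((k:ℝ)*(k:ℝ))^(n-2*k)) ≤
        Real.log ((intervalGraphCount n : ℝ) * (n.factorial : ℝ)) := by
      rw [← hcast]
      apply Real.log_le_log (by rw [hcast]; positivity)
      push_cast at h1 ⊢
      exact h1
    rw [Real.log_pow, Real.log_mul (ne_of_gt hkR) (ne_of_gt hkR),
        Real.log_mul (ne_of_gt (show (0:ℝ) < _ by exact_mod_cast hI_pos)) (ne_of_gt (show (0:ℝ) < _ by exact_mod_cast hF_pos))] at h2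
    calc ((n - 2*k : ℕ):ℝ) * (2 * Real.log k)
        = ((n - 2*k : ℕ):ℝ) * (Real.log k + Real.log k) := by ring
      _ ≤ _ := h2
  have hm : ((n - 2*k : ℕ):ℝ) = (n:ℝ) - 2*(k:ℝ) := by
    rw [Nat.cast_sub h2k_n]; push_cast; ring
  have hm0 : (0:ℝ) ≤ (n:ℝ) - 2*(k:ℝ) := by rw [← hm]; positivity
  have hlogk : L - Real.log L - Real.log 2 ≤ Real.log k := by
    have hpos : (0:ℝ) < (n:ℝ)/(2*L) := by positivity
    have h := Real.log_le_log hpos h_half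
    rw [Real.log_div (ne_of_gt hn0) (by positivity),
        Real.log_mul (by norm_num) (ne_of_gt hL0)] at h
    linarith
  have hLL0 : 0 ≤ Real.log L := Real.log_nonneg (by linarith)
  have hlog2 : 0 ≤ Real.log 2 := Real.log_nonneg (by norm_num)
  -- combine
  rw [hm] at hmain
  have s1 : ((n:ℝ) - 2*k) * (2 * (L - Real.log L - Real.log 2)) ≤
      ((n:ℝ) - 2*k) * (2 * Real.log k) :=
    mul_le_mul_of_nonneg_left (by linarith) hm0
  have e1 : ((n:ℝ) - 2*k) * (2 * (L - Real.log L - Real.log 2)) =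
      2*(n:ℝ)*L - 2*(n:ℝ)*Real.log L - 2*(n:ℝ)*Real.log 2
        - 4*((k:ℝ)*L) + 4*((k:ℝ)*(Real.log L + Real.log 2)) := by ring
  have s2 : 0 ≤ (k:ℝ)*(Real.log L + Real.log 2) := by positivity
  have hlog2le : Real.log 2 ≤ 1 := by
    have := Real.log_le_sub_one_of_pos (x := 2) (by norm_num); linarith
  linarith
end

section
/- log I_n / (n log n) → 1 as n → ∞, where I_n is the number of unlabeled interval graphs on n vertices. -/
section Basics

/-- interval graph from natural-number interval data -/
def mkGraph {n : ℕ} (f : Fin n → ℕ × ℕ) : SimpleGraph (Fin n) where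
  Adj i j := i ≠ j ∧ min (f j).1 (f j).2 ≤ max (f i).1 (f i).2 ∧
    min (f i).1 (f i).2 ≤ max (f j).1 (f j).2
  symm := ⟨fun i j ⟨h1, h2, h3⟩ => ⟨h1.symm, h3, h2⟩⟩
  loopless := ⟨fun i h => h.1 rfl⟩

lemma icc_inter_nonempty {a b c d : ℝ} (hab : a ≤ b) (hcd : c ≤ d) :
    (Set.Icc a b ∩ Set.Icc c d).Nonempty ↔ c ≤ b ∧ a ≤ d := by
  rw [Set.Icc_inter_Icc, Set.nonempty_Icc, max_le_iff, le_min_iff, le_min_iff]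
  constructor
  · rintro ⟨⟨-, h1⟩, h2, -⟩; exact ⟨h2, h1⟩
  · rintro ⟨h1, h2⟩; exact ⟨⟨hab, h2⟩, h1, hcd⟩

lemma mkGraph_isInterval {n : ℕ} (f : Fin n → ℕ × ℕ) : IsIntervalGraph (mkGraph f) := by
  refine ⟨fun i => (min (f i).1 (f i).2 : ℕ), fun i => (max (f i).1 (f i).2 : ℕ),
    fun i => by simp only [Nat.cast_min, Nat.cast_max]; exact_mod_cast min_le_max,
    fun i j hij => ?_⟩
  rw [icc_inter_nonempty
    (by simp only [Nat.cast_min, Nat.cast_max]; exact_mod_cast min_le_max)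
    (by simp only [Nat.cast_min, Nat.cast_max]; exact_mod_cast min_le_max)]
  show (i ≠ j ∧ _ ∧ _) ↔ _
  rw [Nat.cast_le, Nat.cast_le]
  tauto

lemma mkGraph_comp_perm {n : ℕ} (f : Fin n → ℕ × ℕ) (σ : Equiv.Perm (Fin n)) :
    Nonempty (mkGraph (f ∘ σ) ≃g mkGraph f) := by
  refine ⟨⟨σ, fun {i j} => ?_⟩⟩
  show (σ i ≠ σ j ∧ _) ↔ (i ≠ j ∧ _)
  simp [σ.injective.ne_iff, Function.comp]

lemma exists_mkGraph_aux {n : ℕ} (S : Finset ℝ) (hS : S.card ≤ 2*n) :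
    ∃ ι : {x // x ∈ S} → ℕ, (∀ x, ι x < 2*n) ∧ (∀ x y, ι x ≤ ι y ↔ (x:ℝ) ≤ y) := by
  classical
  set e := S.orderIsoOfFin rfl
  refine ⟨fun x => (e.symm x : ℕ), fun x => lt_of_lt_of_le (e.symm x).isLt hS, fun x y => ?_⟩
  rw [Fin.le_def.symm, e.symm.le_iff_le]
  exact Iff.rfl

lemma exists_mkGraph {n : ℕ} (G : SimpleGraph (Fin n)) (h : IsIntervalGraph G) :
    ∃ f : Fin n → ℕ × ℕ, (∀ i, (f i).1 < 2*n ∧ (f i).2 < 2*n) ∧ G = mkGraph f := by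
  classical
  obtain ⟨a, b, hab, hadj⟩ := h
  set S : Finset ℝ := Finset.image a Finset.univ ∪ Finset.image b Finset.univ with hSdef
  have hS : S.card ≤ 2*n := by
    calc S.card ≤ (Finset.image a Finset.univ).card + (Finset.image b Finset.univ).card :=
          Finset.card_union_le _ _
    _ ≤ n + n := by
        refine Nat.add_le_add ?_ ?_ <;>
          exact le_trans (Finset.card_image_le) (by simp)
    _ = 2*n := by ring
  obtain ⟨ι, hιlt, hιle⟩ := exists_mkGraph_aux S hS
  have ha : ∀ i, a i ∈ S := fun i =>
    Finset.mem_union_left _ (Finset.mem_image_of_mem a (Finset.mem_univ i))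
  have hb : ∀ i, b i ∈ S := fun i =>
    Finset.mem_union_right _ (Finset.mem_image_of_mem b (Finset.mem_univ i))
  refine ⟨fun i => (ι ⟨a i, ha i⟩, ι ⟨b i, hb i⟩), fun i => ⟨hιlt _, hιlt _⟩, ?_⟩
  ext i j
  show G.Adj i j ↔ (i ≠ j ∧ _ ∧ _)
  by_cases hij : i = j
  · subst hij; simp
  have hmm : ∀ i, min (ι ⟨a i, ha i⟩) (ι ⟨b i, hb i⟩) = ι ⟨a i, ha i⟩ :=
    fun i => min_eq_left ((hιle _ _).2 (hab i))
  have hmx : ∀ i, max (ι ⟨a i, ha i⟩) (ι ⟨b i, hb i⟩) = ι ⟨b i, hb i⟩ :=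
    fun i => max_eq_right ((hιle _ _).2 (hab i))
  rw [hadj i j hij, icc_inter_nonempty (hab i) (hab j)]
  simp only [hmm, hmx, hιle]
  tauto

lemma exists_perm_of_multiset_eq {n : ℕ} {α : Type*} [DecidableEq α] {f g : Fin n → α}
    (h : (↑(List.ofFn f) : Multiset α) = ↑(List.ofFn g)) :
    ∃ σ : Equiv.Perm (Fin n), ∀ i, g (σ i) = f i := by
  have hcard : ∀ a : α, Fintype.card {i // f i = a} = Fintype.card {i // g i = a} := by
    intro a
    have hcnt : (↑(List.ofFn f) : Multiset α).count a = (↑(List.ofFn g) : Multiset α).count a :=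
      by rw [h]
    have e1 : ∀ (u : Fin n → α), (↑(List.ofFn u) : Multiset α).count a
        = Fintype.card {i // u i = a} := by
      intro u
      rw [Fintype.card_subtype]
      have h2 : (↑(List.ofFn u) : Multiset α) = Multiset.map u Finset.univ.val := by
        rw [List.ofFn_eq_map, Fin.univ_def]
        rfl
      rw [h2, Multiset.count_map, Finset.card, Finset.filter_val]
      exact congrArg Multiset.card (Multiset.filter_congr (fun x _ => eq_comm))
    rw [e1, e1] at hcnt
    exact hcnt
  exact ⟨Equiv.ofFiberEquiv (f := f) (g := g) (fun a => Fintype.equivOfCardEq (hcard a)),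
    fun i => Equiv.ofFiberEquiv_map (fun a => Fintype.equivOfCardEq (hcard a)) i⟩

end Basics

section Counting

variable (n : ℕ)

noncomputable instance : Fintype {G : SimpleGraph (Fin n) // IsIntervalGraph G} := by
  classical exact Fintype.ofFinite _

noncomputable instance : Fintype (Quotient (intervalIsoSetoid n)) := by
  classical exact Fintype.ofFinite _

lemma upper_card :
    intervalGraphCount n ≤ ((2*n)*(2*n) + n - 1).choose n := by
  classical
  set β := Fin (2*n) × Fin (2*n)
  -- the chosen discretization of each class representative
  have hrep : ∀ q : Quotient (intervalIsoSetoid n),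
      ∃ f : Fin n → β, (Quotient.out q).1 = mkGraph (fun i => ((f i).1, (f i).2)) := by
    intro q
    obtain ⟨f, hbd, hG⟩ := exists_mkGraph (Quotient.out q).1 (Quotient.out q).2
    exact ⟨fun i => (⟨(f i).1, (hbd i).1⟩, ⟨(f i).2, (hbd i).2⟩), hG⟩
  choose F hF using hrep
  have hinj : Function.Injective
      (fun q : Quotient (intervalIsoSetoid n) =>
        (⟨(↑(List.ofFn (F q)) : Multiset β), by simp⟩ : Sym β n)) := by
    intro q1 q2 h
    have hm : (↑(List.ofFn (F q1)) : Multiset β) = ↑(List.ofFn (F q2)) :=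
      congrArg Subtype.val h
    obtain ⟨σ, hσ⟩ := exists_perm_of_multiset_eq hm
    have hfun : (fun i => (((F q1) i).1.1, ((F q1) i).2.1))
        = (fun i => (((F q2) i).1.1, ((F q2) i).2.1)) ∘ σ := by
      funext i
      show _ = ((((F q2) (σ i)).1.1, ((F q2) (σ i)).2.1))
      rw [hσ i]
    have hiso : (intervalIsoSetoid n).r (Quotient.out q1) (Quotient.out q2) := by
      show Nonempty ((Quotient.out q1).1 ≃g (Quotient.out q2).1)
      rw [hF q1, hF q2, hfun]
      exact mkGraph_comp_perm _ σ
    exact (Quotient.out_equiv_out.mp hiso)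
  calc intervalGraphCount n ≤ Nat.card (Sym β n) :=
        Nat.card_le_card_of_injective _ hinj
  _ = ((2*n)*(2*n) + n - 1).choose n := by
      rw [Nat.card_eq_fintype_card, Sym.card_sym_eq_choose]
      congr 1
      simp [β]

end Counting

section MoreCounting
variable (n : ℕ)

lemma subtype_le_count_mul_factorial :
    Nat.card {G : SimpleGraph (Fin n) // IsIntervalGraph G}
      ≤ intervalGraphCount n * n.factorial := by
  classical
  have hrep : ∀ H : {G : SimpleGraph (Fin n) // IsIntervalGraph G},
      Nonempty ((Quotient.out (α := {G : SimpleGraph (Fin n) // IsIntervalGraph G})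
        (s := intervalIsoSetoid n) ⟦H⟧).1 ≃g H.1) := fun H =>
    Quotient.mk_out (s := intervalIsoSetoid n) H
  let E := fun H => Classical.choice (hrep H)
  have hinj : Function.Injective
      (fun H : {G : SimpleGraph (Fin n) // IsIntervalGraph G} =>
        ((⟦H⟧ : Quotient (intervalIsoSetoid n)), (E H).toEquiv)) := by
    intro H1 H2 h
    have h1 : (⟦H1⟧ : Quotient (intervalIsoSetoid n)) = ⟦H2⟧ := congrArg Prod.fst h
    have h2 : (E H1).toEquiv = (E H2).toEquiv := congrArg Prod.snd h
    apply Subtype.ext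
    ext i j
    have key : ∀ (H : {G : SimpleGraph (Fin n) // IsIntervalGraph G}) (i j : Fin n),
        H.1.Adj i j ↔ (Quotient.out (s := intervalIsoSetoid n) ⟦H⟧).1.Adj
          ((E H).toEquiv.symm i) ((E H).toEquiv.symm j) :=
      fun H i j => ((E H).symm.map_rel_iff (a := i) (b := j)).symm
    rw [key H1 i j, key H2 i j]
    have hx : (E H1).toEquiv.symm i = (E H2).toEquiv.symm i := by rw [h2]
    have hy : (E H1).toEquiv.symm j = (E H2).toEquiv.symm j := by rw [h2]
    rw [hx, hy]
    exact iff_of_eq (congrArg (fun q : Quotient (intervalIsoSetoid n) =>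
      ((Quotient.out q).1.Adj ((E H2).toEquiv.symm i) ((E H2).toEquiv.symm j))) h1)
  calc Nat.card {G : SimpleGraph (Fin n) // IsIntervalGraph G}
      ≤ Nat.card (Quotient (intervalIsoSetoid n) × Equiv.Perm (Fin n)) :=
        Nat.card_le_card_of_injective _ hinj
  _ = intervalGraphCount n * n.factorial := by
      rw [Nat.card_prod, intervalGraphCount, Nat.card_eq_fintype_card (α := Equiv.Perm (Fin n)),
        Fintype.card_perm, Fintype.card_fin]

end MoreCounting

section Lower

lemma mkGraph_adj {n : ℕ} (w : Fin n → ℕ × ℕ) (i j : Fin n) :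
    (mkGraph w).Adj i j ↔ i ≠ j ∧ min (w j).1 (w j).2 ≤ max (w i).1 (w i).2 ∧
      min (w i).1 (w i).2 ≤ max (w j).1 (w j).2 := Iff.rfl

/-- endpoint data for the lower-bound family -/
def lowerData (n k : ℕ) (f : Fin (n - 2*k) → Fin k × Fin k) : Fin n → ℕ × ℕ :=
  fun i =>
    if (i : ℕ) < k then ((i : ℕ), (i : ℕ))
    else if (i : ℕ) < 2*k then (k+1+((i : ℕ)-k), k+1+((i : ℕ)-k))
    else if h : (i : ℕ) - 2*k < n - 2*k then
      (((f ⟨(i : ℕ)-2*k, h⟩).1 : ℕ), k+1+((f ⟨(i : ℕ)-2*k, h⟩).2 : ℕ))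
    else (0, 0)

set_option maxHeartbeats 2000000 in
lemma lower_inj (n k : ℕ) (hk : 1 ≤ k) (hkn : 2*k ≤ n) :
    Function.Injective (fun f : Fin (n - 2*k) → Fin k × Fin k =>
      (⟨mkGraph (lowerData n k f), mkGraph_isInterval _⟩ :
        {G : SimpleGraph (Fin n) // IsIntervalGraph G})) := by
  intro f g h
  have hG : mkGraph (lowerData n k f) = mkGraph (lowerData n k g) :=
    congrArg Subtype.val h
  funext j
  have hjlt : (j : ℕ) < n - 2*k := j.isLt
  set v : Fin n := ⟨2*k + (j : ℕ), by omega⟩ with hv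
  have hval : ∀ (u : Fin (n - 2*k) → Fin k × Fin k),
      lowerData n k u v = (((u j).1 : ℕ), k+1+((u j).2 : ℕ)) := by
    intro u
    show (if (2*k + (j:ℕ)) < k then _
      else if (2*k + (j:ℕ)) < 2*k then _
      else if h : (2*k + (j:ℕ)) - 2*k < n - 2*k then
        (((u ⟨(2*k + (j:ℕ))-2*k, h⟩).1 : ℕ), k+1+((u ⟨(2*k + (j:ℕ))-2*k, h⟩).2 : ℕ))
      else (0,0)) = _
    rw [if_neg (by omega), if_neg (by omega), dif_pos (by omega : (2*k + (j:ℕ)) - 2*k < n - 2*k)]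
    have he : (⟨(2*k + (j:ℕ)) - 2*k, by omega⟩ : Fin (n - 2*k)) = j := by
      apply Fin.ext
      show (2*k + (j:ℕ)) - 2*k = (j:ℕ)
      omega
    rw [he]
  -- adjacency with "p" vertices recovers the first component
  have hadjp : ∀ (u : Fin (n - 2*k) → Fin k × Fin k) (c : Fin k),
      (mkGraph (lowerData n k u)).Adj v ⟨(c : ℕ), by omega⟩ ↔
        ((u j).1 : ℕ) ≤ (c : ℕ) := by
    intro u c
    have hc := c.isLt
    have hpc : lowerData n k u ⟨(c : ℕ), by omega⟩ = ((c : ℕ), (c : ℕ)) := by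
      show (if ((c:ℕ)) < k then ((c:ℕ), (c:ℕ)) else _) = _
      rw [if_pos hc]
    have hne : v ≠ (⟨(c : ℕ), by omega⟩ : Fin n) := by
      rw [Fin.ne_iff_vne]
      show 2*k + (j:ℕ) ≠ (c:ℕ)
      omega
    rw [mkGraph_adj, hval u, hpc]
    have hs := (u j).1.isLt
    have ht := (u j).2.isLt
    simp only [Prod.fst, Prod.snd]
    constructor
    · rintro ⟨-, -, h3⟩
      omega
    · intro hle
      exact ⟨hne, by omega, by omega⟩
  -- adjacency with "q" vertices recovers the second component
  have hadjq : ∀ (u : Fin (n - 2*k) → Fin k × Fin k) (c : Fin k),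
      (mkGraph (lowerData n k u)).Adj v ⟨k + (c : ℕ), by omega⟩ ↔
        ((c : ℕ) ≤ ((u j).2 : ℕ)) := by
    intro u c
    have hc := c.isLt
    have hpc : lowerData n k u ⟨k + (c : ℕ), by omega⟩ = (k+1+(c : ℕ), k+1+(c : ℕ)) := by
      show (if (k + (c:ℕ)) < k then _
        else if (k + (c:ℕ)) < 2*k then (k+1+((k + (c:ℕ))-k), k+1+((k + (c:ℕ))-k))
        else _) = _
      rw [if_neg (by omega), if_pos (by omega)]
      have he : k + (c:ℕ) - k = (c:ℕ) := by omega
      rw [he]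
    have hne : v ≠ (⟨k + (c : ℕ), by omega⟩ : Fin n) := by
      rw [Fin.ne_iff_vne]
      show 2*k + (j:ℕ) ≠ k + (c:ℕ)
      omega
    rw [mkGraph_adj, hval u, hpc]
    have hs := (u j).1.isLt
    have ht := (u j).2.isLt
    simp only [Prod.fst, Prod.snd]
    constructor
    · rintro ⟨-, h2, -⟩
      omega
    · intro hle
      exact ⟨hne, by omega, by omega⟩
  have hfst : (f j).1 = (g j).1 := by
    have key : ∀ c : Fin k, (((f j).1 : ℕ) ≤ (c:ℕ)) ↔ (((g j).1 : ℕ) ≤ (c:ℕ)) := by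
      intro c
      rw [← hadjp f c, ← hadjp g c, hG]
    have h1 := (key (g j).1).2 le_rfl
    have h2 := (key (f j).1).1 le_rfl
    exact Fin.ext (by omega)
  have hsnd : (f j).2 = (g j).2 := by
    have key : ∀ c : Fin k, ((c:ℕ) ≤ ((f j).2 : ℕ)) ↔ ((c:ℕ) ≤ ((g j).2 : ℕ)) := by
      intro c
      rw [← hadjq f c, ← hadjq g c, hG]
    have h1 := (key (f j).2).1 le_rfl
    have h2 := (key (g j).2).2 le_rfl
    exact Fin.ext (by omega)
  exact Prod.ext hfst hsnd

end Lower

section Numeric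

lemma pow_le_factorial_mul_exp (n : ℕ) :
    (n:ℝ)^n ≤ (n.factorial : ℝ) * Real.exp n := by
  induction n with
  | zero => simp
  | succ n ih =>
    have hstep : ((n:ℝ)+1)^n ≤ (n:ℝ)^n * Real.exp 1 := by
      rcases Nat.eq_zero_or_pos n with hn | hn
      · subst hn
        norm_num
      · have hnpos : (0:ℝ) < n := by exact_mod_cast hn
        have h1 : (n:ℝ)+1 = (n:ℝ) * (1 + 1/(n:ℝ)) := by field_simp
        have h2 : (1 + 1/(n:ℝ)) ≤ Real.exp (1/(n:ℝ)) := by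
          have := Real.add_one_le_exp (1/(n:ℝ)); linarith
        have h3 : (1 + 1/(n:ℝ))^n ≤ (Real.exp (1/(n:ℝ)))^n := by
          apply pow_le_pow_left₀ (by positivity) h2
        have h4 : (Real.exp (1/(n:ℝ)))^n = Real.exp (n * (1/(n:ℝ))) := by
          rw [← Real.exp_nat_mul]
        have h5 : (n:ℝ) * (1/(n:ℝ)) = 1 := by field_simp
        calc ((n:ℝ)+1)^n = (n:ℝ)^n * (1 + 1/(n:ℝ))^n := by rw [h1, mul_pow]
        _ ≤ (n:ℝ)^n * (Real.exp (1/(n:ℝ)))^n := by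
            apply mul_le_mul_of_nonneg_left h3 (by positivity)
        _ = (n:ℝ)^n * Real.exp 1 := by rw [h4, h5]
    have hmain : ((n:ℝ)+1)^(n+1) ≤ ((n+1:ℕ).factorial : ℝ) * Real.exp (n+1) := by
      have hfact : ((n+1:ℕ).factorial : ℝ) = ((n:ℝ)+1) * (n.factorial : ℝ) := by
        push_cast [Nat.factorial_succ]; ring
      have hexp : Real.exp ((n:ℝ)+1) = Real.exp n * Real.exp 1 := by
        rw [← Real.exp_add]
      calc ((n:ℝ)+1)^(n+1) = ((n:ℝ)+1) * ((n:ℝ)+1)^n := by ring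
      _ ≤ ((n:ℝ)+1) * ((n:ℝ)^n * Real.exp 1) := by
          apply mul_le_mul_of_nonneg_left hstep (by positivity)
      _ ≤ ((n:ℝ)+1) * ((n.factorial : ℝ) * Real.exp n * Real.exp 1) := by
          have := mul_le_mul_of_nonneg_right ih (Real.exp_pos 1).le
          nlinarith [Real.exp_pos (1:ℝ), Real.exp_pos ((n:ℝ))]
      _ = ((n+1:ℕ).factorial : ℝ) * Real.exp ((n:ℝ)+1) := by
          rw [hfact, hexp]; ring
    exact_mod_cast hmain

lemma log_factorial_ge (n : ℕ) (hn : 1 ≤ n) :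
    (n:ℝ) * Real.log n - n ≤ Real.log (n.factorial) := by
  have hnpos : (0:ℝ) < n := by exact_mod_cast hn
  have h := pow_le_factorial_mul_exp n
  have hlog := Real.log_le_log (by positivity) h
  rw [Real.log_pow, Real.log_mul (by positivity) (Real.exp_pos _).ne',
    Real.log_exp] at hlog
  linarith

lemma log_factorial_le (n : ℕ) :
    Real.log (n.factorial) ≤ (n:ℝ) * Real.log n := by
  rcases Nat.eq_zero_or_pos n with hn | hn
  · subst hn; simp
  have h := Nat.factorial_le_pow n
  have : Real.log (n.factorial) ≤ Real.log ((n:ℝ)^n) := by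
    apply Real.log_le_log (by positivity)
    exact_mod_cast h
  rwa [Real.log_pow] at this

lemma count_upper (n : ℕ) (hn : 1 ≤ n) :
    Real.log (intervalGraphCount n) ≤ (n:ℝ) * Real.log n + (n:ℝ) * (1 + Real.log 5) := by
  have h1 : intervalGraphCount n * n.factorial ≤ (5*n^2)^n := by
    calc intervalGraphCount n * n.factorial
        ≤ ((2*n)*(2*n) + n - 1).choose n * n.factorial :=
          Nat.mul_le_mul_right _ (upper_card n)
    _ = n.factorial * ((2*n)*(2*n) + n - 1).choose n := Nat.mul_comm _ _
    _ = ((2*n)*(2*n) + n - 1).descFactorial n :=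
          (Nat.descFactorial_eq_factorial_mul_choose _ _).symm
    _ ≤ ((2*n)*(2*n) + n - 1)^n := Nat.descFactorial_le_pow _ _
    _ ≤ (4*n^2 + n)^n := by
          apply Nat.pow_le_pow_left
          have := Nat.sub_le ((2*n)*(2*n) + n) 1
          nlinarith
    _ ≤ (5*n^2)^n := by
          apply Nat.pow_le_pow_left
          nlinarith
  have hQpos : 0 < intervalGraphCount n := by
    have : Nonempty (Quotient (intervalIsoSetoid n)) :=
      ⟨⟦⟨mkGraph (fun _ => (0,0)), mkGraph_isInterval _⟩⟧⟩
    exact Nat.card_pos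
  have h2 : Real.log ((intervalGraphCount n : ℝ) * (n.factorial : ℝ))
      ≤ (n:ℝ) * Real.log (5*(n:ℝ)^2) := by
    have hle : ((intervalGraphCount n * n.factorial : ℕ) : ℝ) ≤ (((5*n^2)^n : ℕ) : ℝ) := by
      exact_mod_cast h1
    push_cast at hle
    calc Real.log ((intervalGraphCount n : ℝ) * (n.factorial : ℝ))
        ≤ Real.log ((5*(n:ℝ)^2)^n) := by
          apply Real.log_le_log (by positivity)
          exact hle
    _ = (n:ℝ) * Real.log (5*(n:ℝ)^2) := by rw [Real.log_pow]
  have hnpos : (0:ℝ) < n := by exact_mod_cast hn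
  have h3 : Real.log ((intervalGraphCount n : ℝ) * (n.factorial : ℝ))
      = Real.log (intervalGraphCount n) + Real.log (n.factorial) := by
    apply Real.log_mul
    · exact_mod_cast hQpos.ne'
    · exact_mod_cast (Nat.factorial_pos n).ne'
  have h4 : Real.log (5*(n:ℝ)^2) = Real.log 5 + 2 * Real.log n := by
    rw [Real.log_mul (by norm_num) (by positivity), Real.log_pow]
    norm_num
  have h5 := log_factorial_ge n hn
  rw [h3, h4] at h2
  nlinarith [h2]

end Numeric

lemma count_lower (n k : ℕ) (hk : 1 ≤ k) (hkn : 2*k ≤ n) :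
    2*((n:ℝ) - 2*(k:ℝ)) * Real.log k - (n:ℝ)*Real.log n
      ≤ Real.log (intervalGraphCount n) := by
  classical
  have hcard : (k*k)^(n-2*k) ≤ intervalGraphCount n * n.factorial := by
    calc (k*k)^(n-2*k)
        = Nat.card (Fin (n - 2*k) → Fin k × Fin k) := by
          rw [Nat.card_eq_fintype_card, Fintype.card_fun]
          simp
    _ ≤ Nat.card {G : SimpleGraph (Fin n) // IsIntervalGraph G} :=
          Nat.card_le_card_of_injective _ (lower_inj n k hk hkn)
    _ ≤ intervalGraphCount n * n.factorial := subtype_le_count_mul_factorial n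
  have hn : 1 ≤ n := le_trans (by omega) hkn
  have hQpos : 0 < intervalGraphCount n := by
    have : Nonempty (Quotient (intervalIsoSetoid n)) :=
      ⟨⟦⟨mkGraph (fun _ => (0,0)), mkGraph_isInterval _⟩⟧⟩
    exact Nat.card_pos
  have hkpos : (0:ℝ) < k := by exact_mod_cast hk
  have hlog : ((n - 2*k : ℕ) : ℝ) * Real.log ((k:ℝ)*(k:ℝ))
      ≤ Real.log (intervalGraphCount n) + Real.log (n.factorial) := by
    have hle : (((k*k)^(n-2*k) : ℕ) : ℝ) ≤ ((intervalGraphCount n * n.factorial : ℕ) : ℝ) := by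
      exact_mod_cast hcard
    push_cast at hle
    have h := Real.log_le_log (by positivity) hle
    rw [Real.log_pow] at h
    have hsplit : Real.log ((intervalGraphCount n : ℝ) * (n.factorial : ℝ))
        = Real.log (intervalGraphCount n) + Real.log (n.factorial) :=
      Real.log_mul (by exact_mod_cast hQpos.ne') (by exact_mod_cast (Nat.factorial_pos n).ne')
    rwa [hsplit] at h
  have hsub : ((n - 2*k : ℕ) : ℝ) = (n:ℝ) - 2*(k:ℝ) := by
    push_cast [Nat.cast_sub hkn]
    ring
  have hlk : Real.log ((k:ℝ)*(k:ℝ)) = 2 * Real.log k := by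
    rw [Real.log_mul hkpos.ne' hkpos.ne']
    ring
  have hf := log_factorial_le n
  rw [hsub, hlk] at hlog
  nlinarith [hlog]

section Final

open Filter Real

noncomputable def kfun (n : ℕ) : ℕ := ⌈(n:ℝ)/(Real.log n)^2⌉₊

theorem log_interval_graph_count_asymptotic' :
    Filter.Tendsto (fun n : ℕ => Real.log (intervalGraphCount n) / ((n : ℝ) * Real.log n))
      Filter.atTop (nhds 1) := by
  classical
  have hlogtop : Tendsto (fun n : ℕ => Real.log n) atTop atTop :=
    Real.tendsto_log_atTop.comp tendsto_natCast_atTop_atTop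
  have hdiv0 : Tendsto (fun x : ℝ => Real.log x / x) atTop (nhds 0) := by
    have h := Real.isLittleO_log_id_atTop
    rw [Asymptotics.isLittleO_iff_tendsto'] at h
    · simpa using h
    · filter_upwards [eventually_ne_atTop (0:ℝ)] with x h1 h2
      exact (h1 h2).elim
  have hloglog : Tendsto (fun n : ℕ => Real.log (Real.log n) / Real.log n) atTop (nhds 0) :=
    hdiv0.comp hlogtop
  have hev2 : ∀ᶠ n : ℕ in atTop, (2:ℝ) ≤ Real.log n :=
    hlogtop.eventually_ge_atTop 2
  have hevn : ∀ᶠ n : ℕ in atTop, (8:ℕ) ≤ n := eventually_ge_atTop 8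
  have hkub : ∀ᶠ n : ℕ in atTop, ((kfun n : ℝ) ≤ (n:ℝ)/(Real.log n)^2 + 1) := by
    filter_upwards [hev2, hevn] with n h2 h8
    have hx : (0:ℝ) ≤ (n:ℝ)/(Real.log n)^2 := by positivity
    exact le_of_lt (Nat.ceil_lt_add_one hx)
  have hklb : ∀ n : ℕ, ((n:ℝ)/(Real.log n)^2 ≤ (kfun n : ℝ)) :=
    fun n => Nat.le_ceil _
  have hk1 : ∀ᶠ n : ℕ in atTop, 1 ≤ kfun n := by
    filter_upwards [hev2, hevn] with n h2 h8
    have hnpos : (0:ℝ) < n := by positivity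
    have hpos : (0:ℝ) < (n:ℝ)/(Real.log n)^2 := by positivity
    exact Nat.ceil_pos.mpr hpos
  have h2kn : ∀ᶠ n : ℕ in atTop, 2 * kfun n ≤ n := by
    filter_upwards [hev2, hevn, hkub] with n h2 h8 hub
    have hnpos : (0:ℝ) < n := by positivity
    have hlog2 : (4:ℝ) ≤ (Real.log n)^2 := by nlinarith
    have h1 : (n:ℝ)/(Real.log n)^2 ≤ (n:ℝ)/4 := by gcongr
    have h8' : (8:ℝ) ≤ n := by exact_mod_cast h8
    have h9 : 2*(kfun n : ℝ) ≤ n := by nlinarith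
    exact_mod_cast h9
  -- kfun n / n tends to 0
  have hratio : Tendsto (fun n : ℕ => (kfun n : ℝ)/(n:ℝ)) atTop (nhds 0) := by
    have hub : ∀ᶠ n : ℕ in atTop,
        (kfun n : ℝ)/(n:ℝ) ≤ 1/(Real.log n)^2 + 1/(n:ℝ) := by
      filter_upwards [hev2, hevn, hkub] with n h2 h8 hub
      have hnpos : (0:ℝ) < n := by positivity
      have hlogpos : (0:ℝ) < Real.log n := by linarith
      have heq : ((n:ℝ)/(Real.log n)^2 + 1)/(n:ℝ) = 1/(Real.log n)^2 + 1/(n:ℝ) := by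
        field_simp
      calc (kfun n : ℝ)/(n:ℝ) ≤ ((n:ℝ)/(Real.log n)^2 + 1)/(n:ℝ) := by gcongr
      _ = 1/(Real.log n)^2 + 1/(n:ℝ) := heq
    have hlb : ∀ᶠ n : ℕ in atTop, (0:ℝ) ≤ (kfun n : ℝ)/(n:ℝ) := by
      filter_upwards [hevn] with n h8
      have hnpos : (0:ℝ) < n := by positivity
      positivity
    have htarget : Tendsto (fun n : ℕ => 1/(Real.log n)^2 + 1/(n:ℝ)) atTop (nhds 0) := by
      have t1 : Tendsto (fun n : ℕ => 1/(Real.log n)^2) atTop (nhds 0) :=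
        Tendsto.div_atTop tendsto_const_nhds
          ((tendsto_pow_atTop (two_ne_zero)).comp hlogtop)
      have t2 : Tendsto (fun n : ℕ => 1/(n:ℝ)) atTop (nhds 0) :=
        Tendsto.div_atTop tendsto_const_nhds tendsto_natCast_atTop_atTop
      simpa using t1.add t2
    exact tendsto_of_tendsto_of_tendsto_of_le_of_le'
      (tendsto_const_nhds) htarget hlb hub
  -- log (kfun n) / log n tends to 1
  have hlogk : Tendsto (fun n : ℕ => Real.log (kfun n)/Real.log n) atTop (nhds 1) := by
    have hub : ∀ᶠ n : ℕ in atTop, Real.log (kfun n)/Real.log n ≤ 1 := by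
      filter_upwards [hev2, hevn, h2kn, hk1] with n h2 h2k h8 hk1'
      have hlogpos : (0:ℝ) < Real.log n := by linarith
      have hkn' : (kfun n : ℝ) ≤ n := by
        have h : kfun n ≤ n := by omega
        exact_mod_cast h
      have hkpos : (0:ℝ) < (kfun n : ℝ) := by exact_mod_cast hk1'
      have hle : Real.log (kfun n) ≤ Real.log n := Real.log_le_log hkpos hkn'
      rw [div_le_one hlogpos]
      exact hle
    have hlb : ∀ᶠ n : ℕ in atTop,
        1 - 2*(Real.log (Real.log n)/Real.log n) ≤ Real.log (kfun n)/Real.log n := by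
      filter_upwards [hev2, hevn] with n h2 h8
      have hnpos : (0:ℝ) < n := by positivity
      have hlogpos : (0:ℝ) < Real.log n := by linarith
      have hxpos : (0:ℝ) < (n:ℝ)/(Real.log n)^2 := by positivity
      have hlogk_lb : Real.log n - 2*Real.log (Real.log n) ≤ Real.log (kfun n) := by
        have h1 : Real.log ((n:ℝ)/(Real.log n)^2) ≤ Real.log (kfun n) :=
          Real.log_le_log hxpos (hklb n)
        rw [Real.log_div hnpos.ne' (by positivity), Real.log_pow] at h1
        push_cast at h1
        linarith
      have heq : 1 - 2*(Real.log (Real.log n)/Real.log n)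
          = (Real.log n - 2*Real.log (Real.log n))/Real.log n := by
        field_simp
      rw [heq]
      gcongr
    have hlbtendsto : Tendsto (fun n : ℕ => 1 - 2*(Real.log (Real.log n)/Real.log n))
        atTop (nhds 1) := by
      have := (tendsto_const_nhds (x := (1:ℝ)) (f := atTop (α := ℕ))).sub
        (hloglog.const_mul 2)
      simpa using this
    exact tendsto_of_tendsto_of_tendsto_of_le_of_le' hlbtendsto tendsto_const_nhds hlb hub
  -- the upper comparison function tends to 1
  have hBlim : Tendsto (fun n : ℕ => 1 + (1 + Real.log 5)/Real.log n) atTop (nhds 1) := by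
    have := (tendsto_const_nhds (x := (1:ℝ)) (f := atTop (α := ℕ))).add
      (Tendsto.div_atTop (tendsto_const_nhds (x := 1 + Real.log 5)) hlogtop)
    simpa using this
  -- the lower comparison function tends to 1
  have hAlim : Tendsto (fun n : ℕ =>
      2*(1 - 2*((kfun n : ℝ)/(n:ℝ)))*(Real.log (kfun n)/Real.log n) - 1) atTop (nhds 1) := by
    have := (((tendsto_const_nhds (x := (2:ℝ)) (f := atTop (α := ℕ))).mul
      ((tendsto_const_nhds (x := (1:ℝ))).sub (hratio.const_mul 2))).mul hlogk).sub
      (tendsto_const_nhds (x := (1:ℝ)))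
    have h2 : (2:ℝ)*(1 - 2*0)*1 - 1 = 1 := by norm_num
    rw [h2] at this
    exact this
  -- eventual inequalities
  have hubL : ∀ᶠ n : ℕ in atTop,
      Real.log (intervalGraphCount n) / ((n : ℝ) * Real.log n)
        ≤ 1 + (1 + Real.log 5)/Real.log n := by
    filter_upwards [hev2, hevn] with n h2 h8
    have hnpos : (0:ℝ) < n := by positivity
    have hlogpos : (0:ℝ) < Real.log n := by linarith
    have hP : (0:ℝ) < (n:ℝ)*Real.log n := mul_pos hnpos hlogpos
    have hcu := count_upper n (by omega)
    rw [div_le_iff₀ hP]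
    have heq : (1 + (1 + Real.log 5)/Real.log n) * ((n:ℝ)*Real.log n)
        = (n:ℝ)*Real.log n + (n:ℝ)*(1 + Real.log 5) := by
      field_simp
    rw [heq]
    linarith
  have hlbL : ∀ᶠ n : ℕ in atTop,
      2*(1 - 2*((kfun n : ℝ)/(n:ℝ)))*(Real.log (kfun n)/Real.log n) - 1
        ≤ Real.log (intervalGraphCount n) / ((n : ℝ) * Real.log n) := by
    filter_upwards [hev2, hevn, hk1, h2kn] with n h2 h8 hk1' h2kn'
    have hnpos : (0:ℝ) < n := by positivity
    have hlogpos : (0:ℝ) < Real.log n := by linarith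
    have hP : (0:ℝ) < (n:ℝ)*Real.log n := mul_pos hnpos hlogpos
    have hcl := count_lower n (kfun n) hk1' h2kn'
    rw [le_div_iff₀ hP]
    have heq : (2*(1 - 2*((kfun n : ℝ)/(n:ℝ)))*(Real.log (kfun n)/Real.log n) - 1)
        * ((n:ℝ)*Real.log n)
        = 2*((n:ℝ) - 2*(kfun n : ℝ)) * Real.log (kfun n) - (n:ℝ)*Real.log n := by
      field_simp
    rw [heq]
    linarith
  exact tendsto_of_tendsto_of_tendsto_of_le_of_le' hAlim hBlim hlbL hubL

end Final

theorem log_interval_graph_count_asymptotic :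
    Filter.Tendsto (fun n : ℕ => Real.log (intervalGraphCount n) / ((n : ℝ) * Real.log n))
      Filter.atTop (nhds 1) := log_interval_graph_count_asymptotic'
end
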